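/- arXiv:1805.03456 — 7 statements merged into one kernel-verified Lean document; each statement's English description precedes it below -/
import Mathlib

section
/- For 0 ≤ α ≤ 1, the function f(t) = t − α(t+1)/2 − √(α²(t+1)² + 4(1−2α)t)/2 is strictly increasing for t ≥ 1. (Here f(Δ) is the difference between the maximum degree Δ and the α-spectral radius of the star S_{Δ+1}.) -/
theorem stmt_9 (α : ℝ) (hα0 : 0 ≤ α) (hα1 : α < 1) :
    StrictMonoOn
      (fun t : ℝ => t - α * (t + 1) / 2
        - Real.sqrt (α ^ 2 * (t + 1) ^ 2 + 4 * (1 - 2 * α) * t) / 2)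
      (Set.Ici (1 : ℝ)) := by
  apply strictMonoOn_of_deriv_pos (convex_Ici 1)
  · apply Continuous.continuousOn
    continuity
  · intro t ht
    rw [interior_Ici] at ht
    have ht' : (1:ℝ) < t := ht
    have hD : 0 < α ^ 2 * (t + 1) ^ 2 + 4 * (1 - 2 * α) * t := by
      nlinarith [sq_nonneg (α * (t + 1) - 2), mul_pos (sub_pos.2 hα1) (sub_pos.2 ht')]
    set D := α ^ 2 * (t + 1) ^ 2 + 4 * (1 - 2 * α) * t with hDdef
    set D' : ℝ := α ^ 2 * (2 * (t + 1)) + 4 * (1 - 2 * α) with hD'def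
    have h1 : HasDerivAt (fun t : ℝ => α ^ 2 * (t + 1) ^ 2 + 4 * (1 - 2 * α) * t) D' t := by
      have hsq : HasDerivAt (fun t : ℝ => (t + 1) ^ 2) (2 * (t + 1)) t := by
        simpa using ((hasDerivAt_id t).add_const 1).fun_pow 2
      have := (hsq.const_mul (α ^ 2)).add ((hasDerivAt_id t).const_mul (4 * (1 - 2 * α)))
      exact this.congr_deriv (by rw [hD'def]; ring)
    have h2 : HasDerivAt (fun t : ℝ => Real.sqrt (α ^ 2 * (t + 1) ^ 2 + 4 * (1 - 2 * α) * t))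
        (D' / (2 * Real.sqrt D)) t := h1.sqrt (ne_of_gt hD)
    have hA : HasDerivAt (fun t : ℝ => t - α * (t + 1) / 2) (1 - α / 2) t := by
      have := (hasDerivAt_id t).sub ((((hasDerivAt_id t).add_const 1).const_mul α).div_const 2)
      exact this.congr_deriv (by ring)
    have hf : HasDerivAt (fun t : ℝ => t - α * (t + 1) / 2
        - Real.sqrt (α ^ 2 * (t + 1) ^ 2 + 4 * (1 - 2 * α) * t) / 2)
        (1 - α / 2 - D' / (2 * Real.sqrt D) / 2) t := hA.sub (h2.div_const 2)
    rw [hf.deriv]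
    have hs : 0 < Real.sqrt D := Real.sqrt_pos.2 hD
    -- key inequality: D' < (4 - 2*α) * sqrt D
    have hg : 0 < α ^ 2 * (t + 1) ^ 2 + (1 - 2 * α) * (4 * (t + 1) - 5 + α) := by
      rcases le_or_gt α (1 / 2) with hhalf | hhalf
      · nlinarith [sq_nonneg (α * (t + 1)), mul_nonneg (by linarith : (0:ℝ) ≤ 1 - 2 * α)
          (by linarith : (0:ℝ) ≤ 4 * (t + 1) - 5 + α), sq_nonneg (2 * α - 3 / 2),
          sq_nonneg (α * (t + 1) - 1)]
      · have hpos : 0 < (2 * α - 1) * (1 - α) * (2 - α) ^ 2 := by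
          have h2a : (0:ℝ) < 2 * α - 1 := by linarith
          exact mul_pos (mul_pos h2a (by linarith)) (pow_pos (by linarith : (0:ℝ) < 2 - α) 2)
        have hα2 : 0 < α ^ 2 := by positivity
        nlinarith [sq_nonneg (α ^ 2 * (t + 1) + 2 * (1 - 2 * α)), hpos, hα2,
          mul_pos hα2 (mul_pos (by linarith : (0:ℝ) < 2 * α - 1) (by nlinarith : (0:ℝ) < 4 * (t+1) - 5 + α))]
    have hsq2 : D' ^ 2 < ((4 - 2 * α) * Real.sqrt D) ^ 2 := by
      have hDs : Real.sqrt D ^ 2 = D := Real.sq_sqrt hD.le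
      have : ((4 - 2 * α) * Real.sqrt D) ^ 2 = (4 - 2 * α) ^ 2 * D := by
        rw [mul_pow, hDs]
      rw [this, hDdef, hD'def]
      nlinarith [mul_pos (sub_pos.2 hα1) hg]
    have hkey : D' < (4 - 2 * α) * Real.sqrt D := by
      have hb : 0 ≤ (4 - 2 * α) * Real.sqrt D := by
        apply mul_nonneg (by linarith) hs.le
      exact lt_of_pow_lt_pow_left₀ 2 hb hsq2
    have : D' / (2 * Real.sqrt D) / 2 < 1 - α / 2 := by
      rw [div_div, div_lt_iff₀ (by positivity)]
      nlinarith [hkey]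
    linarith
end

section
/- Let G be a finite simple graph on n ≥ 2 vertices with maximum degree Δ and α-spectral radius ρ_α(G), where 0 ≤ α < 1. Then Δ − ρ_α(G) ≤ n − 1 − αn/2 − √(α²n² + 4(1−2α)(n−1))/2. -/
open Matrix Finset

lemma rayleigh_le_rho {V : Type*} [Fintype V] [DecidableEq V]
    (M : Matrix V V ℝ) (hM : M.IsHermitian) (ρ : ℝ)
    (hub : ∀ lam : ℝ, (∃ x : V → ℝ, x ≠ 0 ∧ M *ᵥ x = lam • x) → lam ≤ ρ)
    (x : V → ℝ) : x ⬝ᵥ (M *ᵥ x) ≤ ρ * (x ⬝ᵥ x) := by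
  set N : Matrix V V ℝ := ρ • (1 : Matrix V V ℝ) - M with hNdef
  have hN : N.IsHermitian := by
    rw [hNdef, Matrix.IsHermitian, Matrix.conjTranspose_sub, Matrix.conjTranspose_smul,
      Matrix.conjTranspose_one, hM.eq, star_trivial]
  have heig : ∀ i : V, 0 ≤ hN.eigenvalues i := by
    intro i
    set w : V → ℝ := ⇑(hN.eigenvectorBasis i) with hw
    have hw0 : w ≠ 0 := by
      intro h
      exact hN.eigenvectorBasis.orthonormal.ne_zero i (by ext j; exact congrFun h j)
    have hmv : N *ᵥ w = hN.eigenvalues i • w := hN.mulVec_eigenvectorBasis i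
    have hMw : M *ᵥ w = (ρ - hN.eigenvalues i) • w := by
      have : (ρ • (1 : Matrix V V ℝ) - M) *ᵥ w = ρ • w - M *ᵥ w := by
        rw [Matrix.sub_mulVec, Matrix.smul_mulVec, Matrix.one_mulVec]
      have hmv2 : ρ • w - M *ᵥ w = hN.eigenvalues i • w := by
        rw [← this, ← hNdef]; exact hmv
      have h3 : M *ᵥ w = ρ • w - hN.eigenvalues i • w := by
        rw [← hmv2]; module
      rw [h3, sub_smul]
    have := hub (ρ - hN.eigenvalues i) ⟨w, hw0, hMw⟩
    linarith
  have hpsd : N.PosSemidef := hN.posSemidef_iff_eigenvalues_nonneg.mpr heig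
  have h0 := hpsd.dotProduct_mulVec_nonneg x
  simp only [RCLike.re_to_real, star_trivial] at h0
  have : x ⬝ᵥ (N *ᵥ x) = ρ * (x ⬝ᵥ x) - x ⬝ᵥ (M *ᵥ x) := by
    rw [hNdef, Matrix.sub_mulVec, Matrix.smul_mulVec, Matrix.one_mulVec,
      dotProduct_sub, dotProduct_smul]
    simp [smul_eq_mul]
  rw [this] at h0
  linarith

lemma key_sqrt (α t : ℝ) (hα0 : 0 ≤ α) (hα1 : α < 1) (ht : 2 ≤ t) :
    α ^ 2 * t + 2 * (1 - 2 * α) ≤ (2 - α) * Real.sqrt (α ^ 2 * t ^ 2 + 4 * (1 - 2 * α) * (t - 1)) := by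
  set C : ℝ := α ^ 2 * t ^ 2 + 4 * (1 - 2 * α) * (t - 1) with hCdef
  have hC0 : 0 ≤ C := by nlinarith [sq_nonneg (α * t - 2), mul_nonneg (by linarith : (0:ℝ) ≤ t - 2) (by linarith : (0:ℝ) ≤ 1 - α)]
  have hst0 : 0 ≤ Real.sqrt C := Real.sqrt_nonneg C
  have hst2 : Real.sqrt C ^ 2 = C := Real.sq_sqrt hC0
  rcases le_or_gt (α ^ 2 * t + 2 * (1 - 2 * α)) 0 with h | h
  · exact h.trans (mul_nonneg (by linarith) hst0)
  · have hh : 0 ≤ α ^ 2 * t ^ 2 + (1 - 2 * α) * (4 * t - 5 + α) := by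
      rcases le_or_gt α (1/2) with ha | ha
      · nlinarith [sq_nonneg (α * t), mul_nonneg (by linarith : (0:ℝ) ≤ 1 - 2*α) (by linarith : (0:ℝ) ≤ 4*t - 5 + α)]
      · have hα2 : (0:ℝ) < α ^ 2 := pow_pos (by linarith) 2
        nlinarith [sq_nonneg (α ^ 2 * t - (4 * α - 2)),
          mul_nonneg (mul_nonneg (by linarith : (0:ℝ) ≤ 2*α - 1) (by linarith : (0:ℝ) ≤ 1 - α)) (sq_nonneg (2 - α)),
          hα2]
    have hsq : (α ^ 2 * t + 2 * (1 - 2 * α)) ^ 2 ≤ (2 - α) ^ 2 * C := by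
      nlinarith [mul_nonneg (by linarith : (0:ℝ) ≤ 1 - α) hh]
    nlinarith [hsq, hst2, mul_nonneg (by linarith : (0:ℝ) ≤ 2 - α) hst0]

lemma f_mono (α t u : ℝ) (hα0 : 0 ≤ α) (hα1 : α < 1) (ht : 2 ≤ t) (htu : t ≤ u) :
    t - 1 - α * t / 2 - Real.sqrt (α ^ 2 * t ^ 2 + 4 * (1 - 2 * α) * (t - 1)) / 2
      ≤ u - 1 - α * u / 2 - Real.sqrt (α ^ 2 * u ^ 2 + 4 * (1 - 2 * α) * (u - 1)) / 2 := by
  set C : ℝ := α ^ 2 * t ^ 2 + 4 * (1 - 2 * α) * (t - 1) with hCdef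
  set D : ℝ := α ^ 2 * u ^ 2 + 4 * (1 - 2 * α) * (u - 1) with hDdef
  have hC0 : 0 ≤ C := by nlinarith [sq_nonneg (α * t - 2), mul_nonneg (by linarith : (0:ℝ) ≤ t - 2) (by linarith : (0:ℝ) ≤ 1 - α)]
  have hst0 : 0 ≤ Real.sqrt C := Real.sqrt_nonneg C
  have hst2 : Real.sqrt C ^ 2 = C := Real.sq_sqrt hC0
  have key := key_sqrt α t hα0 hα1 ht
  have hB0 : 0 ≤ Real.sqrt C + (2 - α) * (u - t) := by
    have : 0 ≤ (2 - α) * (u - t) := mul_nonneg (by linarith) (by linarith)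
    linarith
  have hDle : D ≤ (Real.sqrt C + (2 - α) * (u - t)) ^ 2 := by
    nlinarith [mul_le_mul_of_nonneg_left key (by linarith : (0:ℝ) ≤ 2 * (u - t)),
      mul_nonneg (sq_nonneg (u - t)) (by linarith : (0:ℝ) ≤ 1 - α)]
  have hsu : Real.sqrt D ≤ Real.sqrt C + (2 - α) * (u - t) := by
    calc Real.sqrt D ≤ Real.sqrt ((Real.sqrt C + (2 - α) * (u - t)) ^ 2) := Real.sqrt_le_sqrt hDle
    _ = Real.sqrt C + (2 - α) * (u - t) := Real.sqrt_sq hB0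
  linarith

set_option maxHeartbeats 1000000 in
theorem stmt_10 {V : Type*} [Fintype V] [DecidableEq V] (G : SimpleGraph V)
    [DecidableRel G.Adj] (hn : 2 ≤ Fintype.card V) (α : ℝ) (hα0 : 0 ≤ α) (hα1 : α < 1)
    (ρ : ℝ)
    (hρ : IsGreatest {lam : ℝ | ∃ x : V → ℝ, x ≠ 0 ∧
        (α • Matrix.diagonal (fun v => (G.degree v : ℝ)) + (1 - α) • G.adjMatrix ℝ) *ᵥ x
          = lam • x} ρ) :
    (G.maxDegree : ℝ) - ρ
      ≤ (Fintype.card V : ℝ) - 1 - α * Fintype.card V / 2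
        - Real.sqrt (α ^ 2 * (Fintype.card V : ℝ) ^ 2
            + 4 * (1 - 2 * α) * ((Fintype.card V : ℝ) - 1)) / 2 := by
  have hne : Nonempty V := Fintype.card_pos_iff.mp (by omega)
  set M : Matrix V V ℝ :=
    α • Matrix.diagonal (fun v => (G.degree v : ℝ)) + (1 - α) • G.adjMatrix ℝ with hMdef
  have hdiag : (Matrix.diagonal fun v => (G.degree v : ℝ)).IsHermitian :=
    Matrix.isHermitian_diagonal _
  have hadj : (G.adjMatrix ℝ).IsHermitian := by
    rw [Matrix.IsHermitian]
    ext i j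
    simp [Matrix.conjTranspose_apply, G.adj_comm i j]
  have hM : M.IsHermitian := by
    rw [hMdef, Matrix.IsHermitian, Matrix.conjTranspose_add, Matrix.conjTranspose_smul,
      Matrix.conjTranspose_smul, hdiag.eq, hadj.eq, star_trivial, star_trivial]
  have hub : ∀ lam : ℝ, (∃ x : V → ℝ, x ≠ 0 ∧ M *ᵥ x = lam • x) → lam ≤ ρ :=
    fun lam h => hρ.2 h
  have hnR : (2:ℝ) ≤ (Fintype.card V : ℝ) := by exact_mod_cast hn
  obtain ⟨v, hvdeg⟩ := G.exists_maximal_degree_vertex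
  rcases Nat.eq_zero_or_pos G.maxDegree with h0 | hpos
  · -- max degree zero : ρ ≥ 0 and RHS ≥ 0
    have hρ0 : 0 ≤ ρ := by
      have hray := rayleigh_le_rho M hM ρ hub (Pi.single v 1)
      have h1 : Pi.single v (1:ℝ) ⬝ᵥ (M *ᵥ Pi.single v 1) = M v v := by
        rw [Matrix.mulVec_single]
        simp [dotProduct, Pi.single_apply]
      have h2 : Pi.single v (1:ℝ) ⬝ᵥ Pi.single v 1 = 1 := by
        simp [dotProduct, Pi.single_apply]
      rw [h1, h2, mul_one] at hray
      have hMvv : M v v = α * G.degree v := by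
        simp [hMdef, Matrix.add_apply, Matrix.diagonal_apply_eq]
      rw [hMvv] at hray
      have : 0 ≤ α * (G.degree v : ℝ) := mul_nonneg hα0 (by positivity)
      linarith
    have hfm := f_mono α 2 (Fintype.card V : ℝ) hα0 hα1 le_rfl hnR
    have hf2 : (2:ℝ) - 1 - α * 2 / 2 - Real.sqrt (α ^ 2 * 2 ^ 2 + 4 * (1 - 2 * α) * (2 - 1)) / 2 = 0 := by
      have he : α ^ 2 * 2 ^ 2 + 4 * (1 - 2 * α) * (2 - 1) = (2 - 2 * α) ^ 2 := by ring
      rw [he, Real.sqrt_sq (by linarith)]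
      ring
    rw [h0]
    push_cast
    linarith
  · -- max degree ≥ 1
    set Δ : ℝ := (G.maxDegree : ℝ) with hΔdef
    have hΔ1 : (1:ℝ) ≤ Δ := by
      rw [hΔdef]
      have : 1 ≤ G.maxDegree := hpos
      exact_mod_cast this
    set t : ℝ := Δ + 1 with htdef
    have ht2 : (2:ℝ) ≤ t := by linarith
    set s : ℝ := Real.sqrt (α ^ 2 * t ^ 2 + 4 * (1 - 2 * α) * (t - 1)) with hsdef
    have hC0 : 0 ≤ α ^ 2 * t ^ 2 + 4 * (1 - 2 * α) * (t - 1) := by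
      nlinarith [sq_nonneg (α * t - 2), mul_nonneg (by linarith : (0:ℝ) ≤ t - 2) (by linarith : (0:ℝ) ≤ 1 - α)]
    have hs0 : 0 ≤ s := Real.sqrt_nonneg _
    have hs2 : s ^ 2 = α ^ 2 * t ^ 2 + 4 * (1 - 2 * α) * (t - 1) := Real.sq_sqrt hC0
    set g : ℝ := (α * t + s) / 2 with hgdef
    have hQ : g ^ 2 - α * t * g - (1 - 2 * α) * (t - 1) = 0 := by
      rw [hgdef]; linear_combination hs2 / 4
    set a : ℝ := g - α with hadef
    set b : ℝ := 1 - α with hbdef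
    have ha0 : 0 ≤ a := by
      have : 0 ≤ α * (t - 2) := mul_nonneg hα0 (by linarith)
      rw [hadef, hgdef]; nlinarith [hs0]
    have hb0 : (0:ℝ) < b := by rw [hbdef]; linarith
    set Nv : Finset V := G.neighborFinset v with hNvdef
    have hNcard : Nv.card = G.maxDegree := by
      rw [hNvdef, G.card_neighborFinset_eq_degree v, hvdeg]
    have hvN : v ∉ Nv := by
      rw [hNvdef]
      simp [SimpleGraph.mem_neighborFinset]
    set x : V → ℝ := fun w => if w = v then a else if w ∈ Nv then b else 0 with hxdef
    have hx0 : ∀ w, 0 ≤ x w := by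
      intro w
      rw [hxdef]
      dsimp only
      split
      · exact ha0
      · split
        · exact hb0.le
        · exact le_rfl
    have hxv : x v = a := by rw [hxdef]; simp
    have hxN : ∀ w ∈ Nv, x w = b := by
      intro w hw
      have hwv : w ≠ v := fun h => hvN (h ▸ hw)
      rw [hxdef]
      simp [hwv, hw]
    have hsupp : ∀ w, w ∉ insert v Nv → x w = 0 := by
      intro w hw
      simp only [Finset.mem_insert, not_or] at hw
      rw [hxdef]
      simp [hw.1, hw.2]
    -- x ⬝ᵥ x
    have hxx : x ⬝ᵥ x = a ^ 2 + Δ * b ^ 2 := by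
      rw [dotProduct, ← Finset.sum_subset (Finset.subset_univ (insert v Nv))
        (fun w _ hw => by rw [hsupp w hw]; ring), Finset.sum_insert hvN, hxv,
        Finset.sum_congr rfl (fun w hw => by rw [hxN w hw]), Finset.sum_const, hNcard,
        nsmul_eq_mul, hΔdef]
      ring
    -- diagonal part
    have hdegN : ∀ w ∈ Nv, (1:ℝ) ≤ (G.degree w : ℝ) := by
      intro w hw
      have hadj' : G.Adj w v := ((SimpleGraph.mem_neighborFinset G v w).mp hw).symm
      have : 0 < G.degree w := (G.degree_pos_iff_exists_adj w).mpr ⟨v, hadj'⟩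
      exact_mod_cast this
    have hT1 : Δ * a ^ 2 + Δ * b ^ 2 ≤ x ⬝ᵥ (Matrix.diagonal (fun u => (G.degree u : ℝ)) *ᵥ x) := by
      have hform : x ⬝ᵥ (Matrix.diagonal (fun u => (G.degree u : ℝ)) *ᵥ x)
          = ∑ w, x w * ((G.degree w : ℝ) * x w) := by
        rw [dotProduct]
        refine Finset.sum_congr rfl fun w _ => ?_
        rw [Matrix.mulVec_diagonal]
      rw [hform]
      have hsub : ∑ w ∈ insert v Nv, x w * ((G.degree w : ℝ) * x w)
          ≤ ∑ w, x w * ((G.degree w : ℝ) * x w) := by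
        apply Finset.sum_le_sum_of_subset_of_nonneg (Finset.subset_univ _)
        intro w _ _
        exact mul_nonneg (hx0 w) (mul_nonneg (by positivity) (hx0 w))
      have hins : Δ * a ^ 2 + Δ * b ^ 2 ≤ ∑ w ∈ insert v Nv, x w * ((G.degree w : ℝ) * x w) := by
        rw [Finset.sum_insert hvN, hxv]
        have hdv : (G.degree v : ℝ) = Δ := by rw [hΔdef, hvdeg]
        rw [hdv]
        have hNsum : Δ * b ^ 2 ≤ ∑ w ∈ Nv, x w * ((G.degree w : ℝ) * x w) := by
          have : ∑ w ∈ Nv, b ^ 2 ≤ ∑ w ∈ Nv, x w * ((G.degree w : ℝ) * x w) := by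
            apply Finset.sum_le_sum
            intro w hw
            rw [hxN w hw]
            nlinarith [hdegN w hw, hb0]
          rw [Finset.sum_const, nsmul_eq_mul, hNcard] at this
          rw [hΔdef]
          exact this
        nlinarith [hNsum]
      exact hins.trans hsub
    -- adjacency part
    have hT2 : 2 * Δ * a * b ≤ x ⬝ᵥ (G.adjMatrix ℝ *ᵥ x) := by
      have hform : x ⬝ᵥ (G.adjMatrix ℝ *ᵥ x)
          = ∑ w, x w * ∑ u ∈ G.neighborFinset w, x u := by
        rw [dotProduct]
        refine Finset.sum_congr rfl fun w _ => ?_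
        rw [SimpleGraph.adjMatrix_mulVec_apply]
      rw [hform]
      have hsub : ∑ w ∈ insert v Nv, x w * ∑ u ∈ G.neighborFinset w, x u
          ≤ ∑ w, x w * ∑ u ∈ G.neighborFinset w, x u := by
        apply Finset.sum_le_sum_of_subset_of_nonneg (Finset.subset_univ _)
        intro w _ _
        exact mul_nonneg (hx0 w) (Finset.sum_nonneg fun u _ => hx0 u)
      have hins : 2 * Δ * a * b ≤ ∑ w ∈ insert v Nv, x w * ∑ u ∈ G.neighborFinset w, x u := by
        rw [Finset.sum_insert hvN, hxv]
        have hvsum : ∑ u ∈ G.neighborFinset v, x u = Δ * b := by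
          rw [← hNvdef, Finset.sum_congr rfl (fun u hu => hxN u hu), Finset.sum_const,
            nsmul_eq_mul, hNcard, hΔdef]
        rw [hvsum]
        have hNsum : Δ * (b * a) ≤ ∑ w ∈ Nv, x w * ∑ u ∈ G.neighborFinset w, x u := by
          have : ∑ w ∈ Nv, b * a ≤ ∑ w ∈ Nv, x w * ∑ u ∈ G.neighborFinset w, x u := by
            apply Finset.sum_le_sum
            intro w hw
            rw [hxN w hw]
            have hvw : v ∈ G.neighborFinset w := by
              rw [SimpleGraph.mem_neighborFinset]
              exact ((SimpleGraph.mem_neighborFinset G v w).mp hw).symm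
            have hsingle : a ≤ ∑ u ∈ G.neighborFinset w, x u := by
              have := Finset.single_le_sum (f := x) (fun u _ => hx0 u) hvw
              rwa [hxv] at this
            exact mul_le_mul_of_nonneg_left hsingle hb0.le
          rw [Finset.sum_const, nsmul_eq_mul, hNcard] at this
          rw [hΔdef]
          exact this
        nlinarith [hNsum, ha0, hb0.le]
      exact hins.trans hsub
    -- combine
    have hsplit : x ⬝ᵥ (M *ᵥ x)
        = α * (x ⬝ᵥ (Matrix.diagonal (fun u => (G.degree u : ℝ)) *ᵥ x))
          + (1 - α) * (x ⬝ᵥ (G.adjMatrix ℝ *ᵥ x)) := by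
      rw [hMdef, Matrix.add_mulVec, Matrix.smul_mulVec, Matrix.smul_mulVec,
        dotProduct_add, dotProduct_smul, dotProduct_smul, smul_eq_mul, smul_eq_mul]
    have hray := rayleigh_le_rho M hM ρ hub x
    have hlow : g * (a ^ 2 + Δ * b ^ 2) ≤ x ⬝ᵥ (M *ᵥ x) := by
      have hcomb : α * (Δ * a ^ 2 + Δ * b ^ 2) + (1 - α) * (2 * Δ * a * b)
          ≤ x ⬝ᵥ (M *ᵥ x) := by
        rw [hsplit]
        have h1 := mul_le_mul_of_nonneg_left hT1 hα0
        have h2 := mul_le_mul_of_nonneg_left hT2 (by linarith : (0:ℝ) ≤ 1 - α)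
        linarith
      have heq : g * (a ^ 2 + Δ * b ^ 2)
          = α * (Δ * a ^ 2 + Δ * b ^ 2) + (1 - α) * (2 * Δ * a * b) := by
        rw [hadef, hbdef]
        linear_combination (g - α) * hQ
      rw [heq]
      exact hcomb
    have hposx : 0 < a ^ 2 + Δ * b ^ 2 := by nlinarith [sq_nonneg a, hb0, hΔ1]
    have hgρ : g ≤ ρ := by
      have := hlow.trans hray
      rw [hxx] at this
      exact le_of_mul_le_mul_right (by linarith [this]) hposx
    have htn : t ≤ (Fintype.card V : ℝ) := by
      have : G.maxDegree < Fintype.card V := by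
        rw [hvdeg]; exact G.degree_lt_card_verts v
      have : (G.maxDegree : ℝ) + 1 ≤ (Fintype.card V : ℝ) := by exact_mod_cast this
      rw [htdef, hΔdef]; linarith
    have hfm := f_mono α t (Fintype.card V : ℝ) hα0 hα1 ht2 htn
    rw [← hsdef] at hfm
    have : Δ - g = t - 1 - α * t / 2 - s / 2 := by
      rw [hgdef, htdef]; ring
    linarith
end

section
/- Let G be a connected finite simple graph with distinct vertices u₁, u₂, v₁, v₂ such that u₁u₂ and v₁v₂ are edges but u₁v₂ and v₁u₂ are not. Let 0 ≤ α < 1 and let x be a positive unit eigenvector of A_α(G) for the largest eigenvalue ρ_α(G). If x_{u₁} ≥ x_{v₁}, x_{v₂} ≥ x_{u₂}, then for G' = G − {u₁u₂, v₁v₂} + {u₁v₂, v₁u₂}, one has ρ_α(G') ≥ ρ_α(G). -/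
open Matrix Finset

lemma rayleigh_le' {V : Type*} [Fintype V] [DecidableEq V] (M : Matrix V V ℝ)
    (hM : M.IsHermitian) (r : ℝ) (hub : ∀ i, hM.eigenvalues i ≤ r)
    (w : V → ℝ) (hw : w ⬝ᵥ w = 1) : w ⬝ᵥ M *ᵥ w ≤ r := by
  set U : Matrix V V ℝ := (hM.eigenvectorUnitary : Matrix V V ℝ) with hU
  have hUU : U * star U = 1 := (Matrix.mem_unitaryGroup_iff).mp hM.eigenvectorUnitary.2
  set y : V → ℝ := star U *ᵥ w with hy
  have hstar : star U = Uᵀ := rfl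
  have hdiag : Matrix.diagonal ((RCLike.ofReal : ℝ → ℝ) ∘ hM.eigenvalues)
      = Matrix.diagonal hM.eigenvalues := by congr 1
  have key : w ⬝ᵥ M *ᵥ w = y ⬝ᵥ (Matrix.diagonal hM.eigenvalues *ᵥ y) := by
    conv_lhs => rw [hM.spectral_theorem, Unitary.conjStarAlgAut_apply, hdiag]
    rw [← mulVec_mulVec, ← mulVec_mulVec, dotProduct_mulVec, ← mulVec_transpose, hy, hstar]
  have hyy : y ⬝ᵥ y = 1 := by
    rw [hy, hstar, dotProduct_mulVec, ← mulVec_transpose, Matrix.transpose_transpose,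
      mulVec_mulVec, ← hstar, hUU, one_mulVec, hw]
  have h2 : y ⬝ᵥ (Matrix.diagonal hM.eigenvalues *ᵥ y) = ∑ i, hM.eigenvalues i * (y i)^2 := by
    simp [dotProduct, Matrix.mulVec_diagonal]
    congr 1; ext i; ring
  rw [key, h2]
  calc ∑ i, hM.eigenvalues i * (y i)^2 ≤ ∑ i, r * (y i)^2 := by
        apply Finset.sum_le_sum
        intro i _
        exact mul_le_mul_of_nonneg_right (hub i) (sq_nonneg _)
    _ = r * (y ⬝ᵥ y) := by rw [← Finset.mul_sum]; congr 1; simp [dotProduct, sq]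
    _ = r := by rw [hyy, mul_one]

lemma degree_eq_sum_aux {V : Type*} [Fintype V] [DecidableEq V] (H : SimpleGraph V)
    [DecidableRel H.Adj] (a : V) :
    (H.degree a : ℝ) = ∑ b, (if H.Adj a b then (1:ℝ) else 0) := by
  rw [SimpleGraph.degree, SimpleGraph.neighborFinset_eq_filter, Finset.card_filter]
  push_cast
  simp

lemma quad_expand_aux {V : Type*} [Fintype V] [DecidableEq V] (H : SimpleGraph V)
    [DecidableRel H.Adj] (x : V → ℝ) :
    x ⬝ᵥ (H.adjMatrix ℝ *ᵥ x) = ∑ a, ∑ b, (if H.Adj a b then (1:ℝ) else 0) * (x a * x b) := by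
  simp only [dotProduct, Matrix.mulVec, dotProduct, SimpleGraph.adjMatrix_apply,
    Finset.mul_sum]
  congr 1; funext a; congr 1; funext b; ring

lemma sum_indicator_pair {V : Type*} [Fintype V] [DecidableEq V] (c d : V) (x : V → ℝ) :
    ∑ a, ∑ b, (if a = c ∧ b = d then (1:ℝ) else 0) * (x a * x b) = x c * x d := by
  rw [Finset.sum_eq_single c]
  · rw [Finset.sum_eq_single d]
    · simp
    · intro b _ hb; simp [hb]
    · simp
  · intro a _ ha
    apply Finset.sum_eq_zero
    intro b _
    simp [ha]
  · simp

theorem stmt_13 {V : Type*} [Fintype V] [DecidableEq V] (G G' : SimpleGraph V)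
    [DecidableRel G.Adj] [DecidableRel G'.Adj] (hconn : G.Connected)
    (u₁ u₂ v₁ v₂ : V)
    (hd : [u₁, u₂, v₁, v₂].Nodup)
    (h12 : G.Adj u₁ u₂) (h34 : G.Adj v₁ v₂)
    (h14 : ¬ G.Adj u₁ v₂) (h32 : ¬ G.Adj v₁ u₂)
    (hG' : ∀ a b : V, G'.Adj a b ↔
        ((G.Adj a b ∧ s(a, b) ≠ s(u₁, u₂) ∧ s(a, b) ≠ s(v₁, v₂))
          ∨ s(a, b) = s(u₁, v₂) ∨ s(a, b) = s(v₁, u₂)))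
    (α : ℝ) (hα0 : 0 ≤ α) (hα1 : α < 1)
    (ρ ρ' : ℝ) (x : V → ℝ) (hpos : ∀ u, 0 < x u) (hunit : ∑ u, x u ^ 2 = 1)
    (heig : (α • Matrix.diagonal (fun v => (G.degree v : ℝ)) + (1 - α) • G.adjMatrix ℝ) *ᵥ x
      = ρ • x)
    (hρ : IsGreatest {lam : ℝ | ∃ y : V → ℝ, y ≠ 0 ∧
        (α • Matrix.diagonal (fun v => (G.degree v : ℝ)) + (1 - α) • G.adjMatrix ℝ) *ᵥ y
          = lam • y} ρ)
    (hρ' : IsGreatest {lam : ℝ | ∃ y : V → ℝ, y ≠ 0 ∧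
        (α • Matrix.diagonal (fun v => (G'.degree v : ℝ)) + (1 - α) • G'.adjMatrix ℝ) *ᵥ y
          = lam • y} ρ')
    (hx1 : x v₁ ≤ x u₁) (hx2 : x u₂ ≤ x v₂) :
    ρ ≤ ρ' := by
  classical
  have n12 : u₁ ≠ u₂ := by intro h; rw [h] at hd; simp at hd
  have n13 : u₁ ≠ v₁ := by intro h; rw [h] at hd; simp at hd
  have n14 : u₁ ≠ v₂ := by intro h; rw [h] at hd; simp at hd
  have n23 : u₂ ≠ v₁ := by intro h; rw [h] at hd; simp at hd
  have n24 : u₂ ≠ v₂ := by intro h; rw [h] at hd; simp at hd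
  have n34 : v₁ ≠ v₂ := by intro h; rw [h] at hd; simp at hd
  have h21 : G.Adj u₂ u₁ := h12.symm
  have h43 : G.Adj v₂ v₁ := h34.symm
  have h41 : ¬ G.Adj v₂ u₁ := fun h => h14 h.symm
  have h23 : ¬ G.Adj u₂ v₁ := fun h => h32 h.symm
  set ind : V → V → ℝ := fun a b =>
    (if a = u₁ ∧ b = v₂ then (1:ℝ) else 0) + (if a = v₂ ∧ b = u₁ then 1 else 0)
    + (if a = v₁ ∧ b = u₂ then 1 else 0) + (if a = u₂ ∧ b = v₁ then 1 else 0)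
    - (if a = u₁ ∧ b = u₂ then 1 else 0) - (if a = u₂ ∧ b = u₁ then 1 else 0)
    - (if a = v₁ ∧ b = v₂ then 1 else 0) - (if a = v₂ ∧ b = v₁ then 1 else 0) with hind_def
  have hind : ∀ a b : V, (if G'.Adj a b then (1:ℝ) else 0)
      = (if G.Adj a b then 1 else 0) + ind a b := by
    intro a b
    simp only [hind_def]
    by_cases hadj : G'.Adj a b
    · rw [if_pos hadj]
      rw [hG' a b] at hadj
      simp only [ne_eq, Sym2.eq_iff, not_or] at hadj
      rcases hadj with ⟨hab, hn1, hn2⟩ | h | h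
      · have e1 : ¬(a = u₁ ∧ b = v₂) := fun ⟨ha, hb⟩ => h14 (ha ▸ hb ▸ hab)
        have e2 : ¬(a = v₂ ∧ b = u₁) := fun ⟨ha, hb⟩ => h41 (ha ▸ hb ▸ hab)
        have e3 : ¬(a = v₁ ∧ b = u₂) := fun ⟨ha, hb⟩ => h32 (ha ▸ hb ▸ hab)
        have e4 : ¬(a = u₂ ∧ b = v₁) := fun ⟨ha, hb⟩ => h23 (ha ▸ hb ▸ hab)
        have f1 : ¬(a = u₁ ∧ b = u₂) := hn1.1
        have f2 : ¬(a = u₂ ∧ b = u₁) := hn1.2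
        have f3 : ¬(a = v₁ ∧ b = v₂) := hn2.1
        have f4 : ¬(a = v₂ ∧ b = v₁) := hn2.2
        simp [hab, e1, e2, e3, e4, f1, f2, f3, f4]
      · rcases h with ⟨ha, hb⟩ | ⟨ha, hb⟩ <;> subst ha <;> subst hb <;>
          simp [h14, h41, n12, n13, n14, n23, n24, n34, n12.symm, n13.symm, n14.symm,
            n23.symm, n24.symm, n34.symm]
      · rcases h with ⟨ha, hb⟩ | ⟨ha, hb⟩ <;> subst ha <;> subst hb <;>
          simp [h32, h23, n12, n13, n14, n23, n24, n34, n12.symm, n13.symm, n14.symm,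
            n23.symm, n24.symm, n34.symm]
    · rw [if_neg hadj]
      rw [hG' a b] at hadj
      simp only [ne_eq, Sym2.eq_iff, not_or] at hadj
      obtain ⟨hA0, hB, hC⟩ := hadj
      have e1 : ¬(a = u₁ ∧ b = v₂) := hB.1
      have e2 : ¬(a = v₂ ∧ b = u₁) := hB.2
      have e3 : ¬(a = v₁ ∧ b = u₂) := hC.1
      have e4 : ¬(a = u₂ ∧ b = v₁) := hC.2
      by_cases hab : G.Adj a b
      · have hrem : ((a = u₁ ∧ b = u₂) ∨ (a = u₂ ∧ b = u₁))
            ∨ ((a = v₁ ∧ b = v₂) ∨ (a = v₂ ∧ b = v₁)) := by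
          by_contra hcon
          simp only [not_or] at hcon
          exact hA0 ⟨hab, ⟨hcon.1.1, hcon.1.2⟩, ⟨hcon.2.1, hcon.2.2⟩⟩
        rcases hrem with (⟨ha, hb⟩ | ⟨ha, hb⟩) | (⟨ha, hb⟩ | ⟨ha, hb⟩) <;> subst ha <;> subst hb <;>
          simp [hab, n12, n13, n14, n23, n24, n34, n12.symm, n13.symm, n14.symm,
            n23.symm, n24.symm, n34.symm]
      · have g1 : ¬(a = u₁ ∧ b = u₂) := fun ⟨ha, hb⟩ => hab (ha ▸ hb ▸ h12)
        have g2 : ¬(a = u₂ ∧ b = u₁) := fun ⟨ha, hb⟩ => hab (ha ▸ hb ▸ h21)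
        have g3 : ¬(a = v₁ ∧ b = v₂) := fun ⟨ha, hb⟩ => hab (ha ▸ hb ▸ h34)
        have g4 : ¬(a = v₂ ∧ b = v₁) := fun ⟨ha, hb⟩ => hab (ha ▸ hb ▸ h43)
        simp [hab, e1, e2, e3, e4, g1, g2, g3, g4]
  -- degrees are preserved
  have hdegR : ∀ a : V, (G'.degree a : ℝ) = (G.degree a : ℝ) := by
    intro a
    rw [degree_eq_sum_aux G' a, degree_eq_sum_aux G a]
    rw [Finset.sum_congr rfl (fun b _ => hind a b), Finset.sum_add_distrib]
    have hzero : ∑ b, ind a b = 0 := by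
      simp only [hind_def]
      simp only [Finset.sum_sub_distrib, Finset.sum_add_distrib]
      simp [Finset.sum_ite_eq', ite_and]
      ring
    rw [hzero, add_zero]
  set A : Matrix V V ℝ := α • Matrix.diagonal (fun v => (G.degree v : ℝ)) + (1 - α) • G.adjMatrix ℝ
    with hA
  set A' : Matrix V V ℝ :=
    α • Matrix.diagonal (fun v => (G'.degree v : ℝ)) + (1 - α) • G'.adjMatrix ℝ with hA'
  have hdiageq : Matrix.diagonal (fun v => (G'.degree v : ℝ))
      = Matrix.diagonal (fun v => (G.degree v : ℝ)) :=
    congrArg Matrix.diagonal (funext hdegR)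
  have hxx : x ⬝ᵥ x = 1 := by
    rw [dotProduct]
    simpa [sq] using hunit
  have hρx : x ⬝ᵥ (A *ᵥ x) = ρ := by
    rw [heig, dotProduct_smul, smul_eq_mul, hxx, mul_one]
  have hadjdiff : x ⬝ᵥ (G'.adjMatrix ℝ *ᵥ x) - x ⬝ᵥ (G.adjMatrix ℝ *ᵥ x)
      = 2 * (x u₁ - x v₁) * (x v₂ - x u₂) := by
    rw [quad_expand_aux G' x, quad_expand_aux G x, ← Finset.sum_sub_distrib]
    have step1 : ∀ a : V, (∑ b, (if G'.Adj a b then (1:ℝ) else 0) * (x a * x b))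
        - (∑ b, (if G.Adj a b then (1:ℝ) else 0) * (x a * x b))
        = ∑ b, ind a b * (x a * x b) := by
      intro a
      rw [← Finset.sum_sub_distrib]
      congr 1; funext b
      rw [hind a b]; ring
    rw [Finset.sum_congr rfl (fun a _ => step1 a)]
    have point : ∀ a b : V, ind a b * (x a * x b) =
        (if a = u₁ ∧ b = v₂ then (1:ℝ) else 0) * (x a * x b)
        + (if a = v₂ ∧ b = u₁ then (1:ℝ) else 0) * (x a * x b)
        + (if a = v₁ ∧ b = u₂ then (1:ℝ) else 0) * (x a * x b)
        + (if a = u₂ ∧ b = v₁ then (1:ℝ) else 0) * (x a * x b)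
        - (if a = u₁ ∧ b = u₂ then (1:ℝ) else 0) * (x a * x b)
        - (if a = u₂ ∧ b = u₁ then (1:ℝ) else 0) * (x a * x b)
        - (if a = v₁ ∧ b = v₂ then (1:ℝ) else 0) * (x a * x b)
        - (if a = v₂ ∧ b = v₁ then (1:ℝ) else 0) * (x a * x b) := by
      intro a b; simp only [hind_def]; ring
    rw [Finset.sum_congr rfl (fun a _ => Finset.sum_congr rfl (fun b _ => point a b))]
    simp only [Finset.sum_sub_distrib, Finset.sum_add_distrib]
    rw [sum_indicator_pair u₁ v₂ x, sum_indicator_pair v₂ u₁ x, sum_indicator_pair v₁ u₂ x,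
      sum_indicator_pair u₂ v₁ x, sum_indicator_pair u₁ u₂ x, sum_indicator_pair u₂ u₁ x,
      sum_indicator_pair v₁ v₂ x, sum_indicator_pair v₂ v₁ x]
    ring
  have hQ : x ⬝ᵥ (A' *ᵥ x) = ρ + (1 - α) * (2 * (x u₁ - x v₁) * (x v₂ - x u₂)) := by
    rw [hA', hdiageq]
    have hlin : x ⬝ᵥ ((α • Matrix.diagonal (fun v => (G.degree v : ℝ))
          + (1 - α) • G'.adjMatrix ℝ) *ᵥ x)
        = x ⬝ᵥ (A *ᵥ x) + (1 - α) * (x ⬝ᵥ (G'.adjMatrix ℝ *ᵥ x) - x ⬝ᵥ (G.adjMatrix ℝ *ᵥ x)) := by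
      rw [hA]
      simp only [Matrix.add_mulVec, Matrix.smul_mulVec, dotProduct_add, dotProduct_smul,
        smul_eq_mul]
      ring
    rw [hlin, hρx, hadjdiff]
  have hA'herm : A'.IsHermitian := by
    have hadjH : (G'.adjMatrix ℝ)ᴴ = G'.adjMatrix ℝ := by
      ext i j
      simp [Matrix.conjTranspose_apply, SimpleGraph.adjMatrix_apply, SimpleGraph.adj_comm]
    have : A'ᴴ = A' := by
      rw [hA', Matrix.conjTranspose_add, Matrix.conjTranspose_smul, Matrix.conjTranspose_smul,
        (Matrix.isHermitian_diagonal _ : _ᴴ = _), hadjH, star_trivial, star_trivial]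
    exact this
  have hub : ∀ i, hA'herm.eigenvalues i ≤ ρ' := by
    intro i
    apply hρ'.2
    refine ⟨(hA'herm.eigenvectorBasis i : V → ℝ), ?_, ?_⟩
    · intro h
      exact hA'herm.eigenvectorBasis.orthonormal.ne_zero i (by ext j; exact congrFun h j)
    · exact hA'herm.mulVec_eigenvectorBasis i
  have hray : x ⬝ᵥ (A' *ᵥ x) ≤ ρ' := rayleigh_le' A' hA'herm ρ' hub x hxx
  have hge : ρ ≤ x ⬝ᵥ (A' *ᵥ x) := by
    rw [hQ]
    have h1 : (0:ℝ) ≤ 1 - α := by linarith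
    have h2 : (0:ℝ) ≤ 2 * (x u₁ - x v₁) * (x v₂ - x u₂) := by
      have t1 := sub_nonneg.mpr hx1
      have t2 := sub_nonneg.mpr hx2
      positivity
    nlinarith
  linarith
end

section
/- Let T be a tree (or more generally a unicyclic graph) with maximum degree Δ ≥ 2 and let 0 ≤ α ≤ 1. Then the α-spectral radius satisfies ρ_α(T) ≤ αΔ + 2(1−α)√(Δ−1). -/
open Matrix Finset

set_option linter.unusedSectionVars false

namespace Unicyclic15

variable {V : Type*} [Fintype V] [DecidableEq V] {G : SimpleGraph V} [DecidableRel G.Adj]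


lemma ite_le_symm (a b : ℕ) :
    ((if a ≤ b then 1 else 0) + (if b ≤ a then 1 else 0)) = 1 + (if a = b then 1 else 0) := by
  split_ifs <;> omega

lemma sum_nbhd_swap (f : V → V → ℕ) :
    ∑ v, ∑ u ∈ G.neighborFinset v, f v u = ∑ v, ∑ u ∈ G.neighborFinset v, f u v := by
  have h : ∀ (g : V → V → ℕ), ∑ v, ∑ u ∈ G.neighborFinset v, g v u
      = ∑ v, ∑ u, if G.Adj v u then g v u else 0 := by
    intro g
    refine Finset.sum_congr rfl fun v _ => ?_
    rw [SimpleGraph.neighborFinset_eq_filter, Finset.sum_filter]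
  rw [h, h, Finset.sum_comm]
  refine Finset.sum_congr rfl fun v _ => Finset.sum_congr rfl fun u _ => ?_
  exact if_congr (G.adj_comm u v) rfl rfl

lemma key_identity (h : V → ℕ) :
    2 * ∑ v, ((G.neighborFinset v).filter fun u => h u ≤ h v).card
      = ∑ v, G.degree v + ∑ v, ((G.neighborFinset v).filter fun u => h u = h v).card := by
  have hswap := sum_nbhd_swap (G := G) (fun a b => if h b ≤ h a then 1 else 0)
  have ecnt : ∑ v, ((G.neighborFinset v).filter fun u => h u ≤ h v).card
      = ∑ v, ∑ u ∈ G.neighborFinset v, (if h u ≤ h v then 1 else 0) :=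
    Finset.sum_congr rfl fun v _ => Finset.card_filter _ _
  have eeq : ∑ v, ((G.neighborFinset v).filter fun u => h u = h v).card
      = ∑ v, ∑ u ∈ G.neighborFinset v, (if h u = h v then 1 else 0) :=
    Finset.sum_congr rfl fun v _ => Finset.card_filter _ _
  have edeg : ∑ v, G.degree v = ∑ v, ∑ u ∈ G.neighborFinset v, 1 := by
    refine Finset.sum_congr rfl fun v _ => ?_
    rw [Finset.sum_const, ← SimpleGraph.card_neighborFinset_eq_degree]
    simp
  rw [ecnt, eeq, edeg, two_mul]
  nth_rewrite 2 [hswap]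
  rw [← Finset.sum_add_distrib, ← Finset.sum_add_distrib]
  refine Finset.sum_congr rfl fun v _ => ?_
  rw [← Finset.sum_add_distrib, ← Finset.sum_add_distrib]
  exact Finset.sum_congr rfl fun u _ => ite_le_symm _ _



lemma sum_eq_of_card {F : Finset V} {f : V → ℕ} {c : ℕ}
    (h1 : ∀ a ∈ F, c ≤ f a) (h2 : ∑ a ∈ F, f a = F.card * c) : ∀ a ∈ F, f a = c := by
  by_contra hcon
  push_neg at hcon
  obtain ⟨a, ha, hne⟩ := hcon
  have hlt : ∑ b ∈ F, (fun _ => c) b < ∑ b ∈ F, f b :=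
    Finset.sum_lt_sum h1 ⟨a, ha, lt_of_le_of_ne (h1 a ha) (Ne.symm hne)⟩
  rw [Finset.sum_const, smul_eq_mul, h2] at hlt
  omega

lemma second_nbr {v w : V} (hadj : G.Adj v w) (p : G.Walk v w) (hedge : s(v, w) ∉ p.edges) :
    ∃ w', w' ≠ w ∧ G.Adj v w' ∧ w' ∈ p.support := by
  cases p with
  | nil => exact absurd hadj G.irrefl
  | @cons _ x _ h2 r2 =>
    refine ⟨x, ?_, h2, ?_⟩
    · rintro rfl
      exact hedge (by simp)
    · simp [SimpleGraph.Walk.support_cons, SimpleGraph.Walk.start_mem_support]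

lemma cycle_start_two {v : V} (q : G.Walk v v) (hq : q.IsCycle) :
    ∃ w w', w ≠ w' ∧ G.Adj v w ∧ G.Adj v w' ∧ w ∈ q.support ∧ w' ∈ q.support := by
  cases q with
  | nil => exact absurd hq SimpleGraph.Walk.IsCycle.not_of_nil
  | @cons _ x _ hadj r =>
    rw [SimpleGraph.Walk.cons_isCycle_iff] at hq
    obtain ⟨hpath, hedge⟩ := hq
    have hedge' : s(v, x) ∉ r.reverse.edges := by
      rw [SimpleGraph.Walk.edges_reverse, List.mem_reverse]
      exact hedge
    obtain ⟨w', hne, hadj', hmem⟩ := second_nbr hadj r.reverse hedge'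
    refine ⟨x, w', Ne.symm hne, hadj, hadj', ?_, ?_⟩
    · simp [SimpleGraph.Walk.support_cons, SimpleGraph.Walk.start_mem_support]
    · rw [SimpleGraph.Walk.support_reverse, List.mem_reverse] at hmem
      simp [SimpleGraph.Walk.support_cons, hmem]

lemma cycle_two_neighbors {x : V} (c : G.Walk x x) (hc : c.IsCycle) {v : V} (hv : v ∈ c.support) :
    ∃ w w', w ≠ w' ∧ G.Adj v w ∧ G.Adj v w' ∧ w ∈ c.support ∧ w' ∈ c.support := by
  have hmm : ∀ y, y ∈ (c.rotate v hv).support → y ∈ c.support := by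
    intro y hy
    rw [SimpleGraph.Walk.support_eq_cons] at hy
    rcases List.mem_cons.mp hy with rfl | hy
    · exact hv
    · exact List.mem_of_mem_tail (((SimpleGraph.Walk.support_rotate c v hv).mem_iff).mp hy)
  obtain ⟨w, w', hne, h1, h2, m1, m2⟩ := cycle_start_two (c.rotate v hv) (hc.rotate hv)
  exact ⟨w, w', hne, h1, h2, hmm w m1, hmm w' m2⟩


lemma levels_facts (hconn : G.Connected) (S : Finset V) (hSne : S.Nonempty) :
    ∃ h : V → ℕ,
      (∀ v, h v = 0 ↔ v ∈ S) ∧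
      (∀ u v : V, G.Adj u v → h v ≤ h u + 1) ∧
      (∀ v ∉ S, ∃ u ∈ G.neighborFinset v, h u < h v) := by
  refine ⟨fun v => S.inf' hSne fun s => G.dist v s, fun v => ?_, fun u v hadj => ?_, fun v hv => ?_⟩
  · constructor
    · intro h0
      obtain ⟨s, hs, he⟩ := Finset.exists_mem_eq_inf' hSne fun s => G.dist v s
      have : v = s := hconn.dist_eq_zero_iff.mp (by rw [← he]; exact h0)
      exact this ▸ hs
    · intro hv
      have h1 : S.inf' hSne (fun s => G.dist v s) ≤ G.dist v v := Finset.inf'_le _ hv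
      rw [SimpleGraph.dist_self] at h1
      show S.inf' hSne (fun s => G.dist v s) = 0
      omega
  · obtain ⟨s, hs, he⟩ := Finset.exists_mem_eq_inf' hSne fun s => G.dist u s
    have h1 : G.dist v s ≤ G.dist v u + G.dist u s := hconn.dist_triangle
    have h2 : G.dist v u = 1 := SimpleGraph.dist_eq_one_iff_adj.mpr hadj.symm
    have h3 : S.inf' hSne (fun s' => G.dist v s') ≤ G.dist v s := Finset.inf'_le _ hs
    simp only []
    omega
  · obtain ⟨s, hs, he⟩ := Finset.exists_mem_eq_inf' hSne fun s => G.dist v s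
    have hne0 : G.dist v s ≠ 0 := by
      intro h0
      exact hv ((hconn.dist_eq_zero_iff.mp h0) ▸ hs)
    obtain ⟨p, hp⟩ := hconn.exists_walk_length_eq_dist v s
    cases p with
    | nil => simp at hne0
    | @cons _ u _ hadj q =>
      refine ⟨u, by rw [SimpleGraph.mem_neighborFinset]; exact hadj, ?_⟩
      have h1 : G.dist u s ≤ q.length := SimpleGraph.dist_le q
      have h2 : S.inf' hSne (fun s' => G.dist u s') ≤ G.dist u s := Finset.inf'_le _ hs
      have h3 : q.length + 1 = G.dist v s := by simpa using hp
      simp only []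
      omega




lemma cnt_eq_on_S {S : Finset V} {h : V → ℕ} (hS0 : ∀ v, h v = 0 ↔ v ∈ S) {v : V} (hv : v ∈ S) :
    ((G.neighborFinset v).filter fun u => h u ≤ h v) = ((G.neighborFinset v).filter fun u => h u = h v) := by
  apply Finset.filter_congr
  intro u _
  have : h v = 0 := (hS0 v).mpr hv
  rw [this]
  simp [Nat.le_zero]

lemma squeeze_facts (S : Finset V) (h : V → ℕ)
    (hS0 : ∀ v, h v = 0 ↔ v ∈ S)
    (hdown : ∀ v ∉ S, ∃ u ∈ G.neighborFinset v, h u < h v) :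
    2 * (∑ v ∈ S, ((G.neighborFinset v).filter fun u => h u = h v).card
        + ∑ v ∈ Sᶜ, ((G.neighborFinset v).filter fun u => h u ≤ h v).card)
      = ∑ v, G.degree v
        + (∑ v ∈ S, ((G.neighborFinset v).filter fun u => h u = h v).card
          + ∑ v ∈ Sᶜ, ((G.neighborFinset v).filter fun u => h u = h v).card)
    ∧ Sᶜ.card + ∑ v ∈ Sᶜ, ((G.neighborFinset v).filter fun u => h u = h v).card
        ≤ ∑ v ∈ Sᶜ, ((G.neighborFinset v).filter fun u => h u ≤ h v).card := by
  constructor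
  · have hid := key_identity (G := G) h
    have hsplit1 := Finset.sum_add_sum_compl S (fun v => ((G.neighborFinset v).filter fun u => h u ≤ h v).card)
    have hsplit2 := Finset.sum_add_sum_compl S (fun v => ((G.neighborFinset v).filter fun u => h u = h v).card)
    have hcong : ∑ v ∈ S, ((G.neighborFinset v).filter fun u => h u ≤ h v).card
        = ∑ v ∈ S, ((G.neighborFinset v).filter fun u => h u = h v).card :=
      Finset.sum_congr rfl fun v hv => by rw [cnt_eq_on_S hS0 hv]
    omega
  · have hpt : ∀ v ∈ Sᶜ, ((G.neighborFinset v).filter fun u => h u = h v).card + 1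
        ≤ ((G.neighborFinset v).filter fun u => h u ≤ h v).card := by
      intro v hv
      obtain ⟨u, hu, hult⟩ := hdown v (Finset.mem_compl.mp hv)
      have hsub : insert u ((G.neighborFinset v).filter fun u => h u = h v)
          ⊆ ((G.neighborFinset v).filter fun u => h u ≤ h v) := by
        intro a ha
        rcases Finset.mem_insert.mp ha with rfl | ha
        · exact Finset.mem_filter.mpr ⟨hu, le_of_lt hult⟩
        · obtain ⟨h1, h2⟩ := Finset.mem_filter.mp ha
          exact Finset.mem_filter.mpr ⟨h1, le_of_eq h2⟩
      have hnm : u ∉ ((G.neighborFinset v).filter fun u => h u = h v) := by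
        intro hmem
        exact absurd ((Finset.mem_filter.mp hmem).2) (Nat.ne_of_lt hult)
      calc ((G.neighborFinset v).filter fun u => h u = h v).card + 1
          = (insert u ((G.neighborFinset v).filter fun u => h u = h v)).card :=
            (Finset.card_insert_of_notMem hnm).symm
        _ ≤ _ := Finset.card_le_card hsub
    calc Sᶜ.card + ∑ v ∈ Sᶜ, ((G.neighborFinset v).filter fun u => h u = h v).card
        = ∑ v ∈ Sᶜ, (((G.neighborFinset v).filter fun u => h u = h v).card + 1) := by
          rw [Finset.sum_add_distrib, Finset.sum_const, smul_eq_mul, mul_one, add_comm]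
      _ ≤ _ := Finset.sum_le_sum hpt












lemma exists_good_levels (hconn : G.Connected)
    (hsize : G.edgeFinset.card = Fintype.card V - 1 ∨ G.edgeFinset.card = Fintype.card V) :
    ∃ h : V → ℕ, (∀ u v : V, G.Adj u v → h v ≤ h u + 1) ∧
      ∀ v, ((G.neighborFinset v).filter fun u => h u ≤ h v).card ≤ if h v = 0 then 2 else 1 := by
  have hD : ∑ v, G.degree v = 2 * G.edgeFinset.card := G.sum_degrees_eq_twice_card_edges
  have hNV : 0 < Fintype.card V := Fintype.card_pos_iff.mpr hconn.nonempty
  obtain ⟨S, hSne, hcase⟩ :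
      ∃ S : Finset V, S.Nonempty ∧
        ((G.edgeFinset.card = Fintype.card V ∧
            ∀ v ∈ S, 2 ≤ ((G.neighborFinset v).filter (· ∈ S)).card) ∨
         (S.card = 1 ∧ G.edgeFinset.card + 1 = Fintype.card V ∧
            ∀ v ∈ S, ((G.neighborFinset v).filter (· ∈ S)).card = 0)) := by
    rcases hsize with hm | hm
    · -- tree case
      obtain ⟨r⟩ := hconn.nonempty
      refine ⟨{r}, Finset.singleton_nonempty r, Or.inr ⟨Finset.card_singleton r, by omega, ?_⟩⟩
      intro v hv
      rw [Finset.mem_singleton] at hv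
      subst hv
      rw [Finset.card_eq_zero, Finset.filter_eq_empty_iff]
      intro u hu hmem
      have hadj : G.Adj v u := (SimpleGraph.mem_neighborFinset G v u).mp hu
      rw [Finset.mem_singleton] at hmem
      exact G.irrefl (hmem ▸ hadj)
    · -- unicyclic case: find a cycle
      have hnotacyclic : ¬ G.IsAcyclic := by
        intro hac
        have htree : G.IsTree := ⟨hconn, hac⟩
        have := htree.card_edgeFinset
        omega
      unfold SimpleGraph.IsAcyclic at hnotacyclic
      push_neg at hnotacyclic
      obtain ⟨x, c, hc⟩ := hnotacyclic
      refine ⟨c.support.toFinset, ⟨x, List.mem_toFinset.mpr c.start_mem_support⟩,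
        Or.inl ⟨hm, ?_⟩⟩
      intro v hv
      obtain ⟨w, w', hne, h1, h2, m1, m2⟩ :=
        cycle_two_neighbors c hc (List.mem_toFinset.mp hv)
      have hsub : ({w, w'} : Finset V) ⊆ (G.neighborFinset v).filter (· ∈ c.support.toFinset) := by
        intro a ha
        rcases Finset.mem_insert.mp ha with rfl | ha
        · exact Finset.mem_filter.mpr ⟨(SimpleGraph.mem_neighborFinset G v a).mpr h1,
            List.mem_toFinset.mpr m1⟩
        · rw [Finset.mem_singleton] at ha
          subst ha
          exact Finset.mem_filter.mpr ⟨(SimpleGraph.mem_neighborFinset G v a).mpr h2,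
            List.mem_toFinset.mpr m2⟩
      calc 2 = ({w, w'} : Finset V).card := (Finset.card_pair hne).symm
        _ ≤ _ := Finset.card_le_card hsub
  -- now build levels
  obtain ⟨h, hS0, hLip, hdown⟩ := levels_facts hconn S hSne
  obtain ⟨hident, hlower⟩ := squeeze_facts S h hS0 hdown
  have heqS : ∀ v ∈ S, ((G.neighborFinset v).filter fun u => h u = h v)
      = ((G.neighborFinset v).filter (· ∈ S)) := by
    intro v hv
    apply Finset.filter_congr
    intro u _
    have h0 : h v = 0 := (hS0 v).mpr hv
    rw [h0, hS0 u]
  have hKS : S.card + Sᶜ.card = Fintype.card V := Finset.card_add_card_compl S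
  -- abbreviations
  set Ey := ∑ v ∈ S, ((G.neighborFinset v).filter fun u => h u = h v).card with hEy
  set Ex := ∑ v ∈ Sᶜ, ((G.neighborFinset v).filter fun u => h u = h v).card with hEx
  set X := ∑ v ∈ Sᶜ, ((G.neighborFinset v).filter fun u => h u ≤ h v).card with hX
  have hXK : X = Sᶜ.card ∧ (∀ v ∈ S, ((G.neighborFinset v).filter fun u => h u ≤ h v).card ≤ 2) := by
    rcases hcase with ⟨hm, hdeg2⟩ | ⟨hs1, hm, hdeg0⟩
    · have hEy2 : S.card * 2 ≤ Ey := by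
        rw [hEy]
        calc S.card * 2 = ∑ _v ∈ S, 2 := by rw [Finset.sum_const, smul_eq_mul, mul_comm]
          _ ≤ _ := Finset.sum_le_sum (fun v hv => by
              show 2 ≤ ((G.neighborFinset v).filter fun u => h u = h v).card
              rw [heqS v hv]; exact hdeg2 v hv)
      have hXeq : X = Sᶜ.card ∧ Ey = S.card * 2 := by omega
      refine ⟨hXeq.1, fun v hv => ?_⟩
      rw [cnt_eq_on_S hS0 hv]
      have := sum_eq_of_card (F := S) (f := fun v => ((G.neighborFinset v).filter fun u => h u = h v).card)
        (c := 2) (fun v hv => by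
          show 2 ≤ ((G.neighborFinset v).filter fun u => h u = h v).card
          rw [heqS v hv]; exact hdeg2 v hv) hXeq.2
      exact le_of_eq (this v hv)
    · have hEy0 : Ey = 0 := by
        rw [hEy]
        refine Finset.sum_eq_zero fun v hv => ?_
        rw [heqS v hv]
        exact hdeg0 v hv
      refine ⟨by omega, fun v hv => ?_⟩
      rw [cnt_eq_on_S hS0 hv, heqS v hv, hdeg0 v hv]
      omega
  refine ⟨h, hLip, fun v => ?_⟩
  by_cases hv : v ∈ S
  · rw [if_pos ((hS0 v).mpr hv)]
    exact hXK.2 v hv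
  · have hpos : h v ≠ 0 := fun h0 => hv ((hS0 v).mp h0)
    rw [if_neg hpos]
    have hone : ∀ w ∈ Sᶜ, 1 ≤ ((G.neighborFinset w).filter fun u => h u ≤ h w).card := by
      intro w hw
      obtain ⟨u, hu, hult⟩ := hdown w (Finset.mem_compl.mp hw)
      exact Finset.card_pos.mpr ⟨u, Finset.mem_filter.mpr ⟨hu, le_of_lt hult⟩⟩
    have := sum_eq_of_card (F := Sᶜ)
      (f := fun w => ((G.neighborFinset w).filter fun u => h u ≤ h w).card) (c := 1)
      hone (by rw [← hX, hXK.1, mul_one])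
    exact le_of_eq (this v (Finset.mem_compl.mpr hv))


lemma sum_pow_le {t : ℝ} (ht : 1 ≤ t) {Δ : ℕ} (hΔ : 2 ≤ Δ) (ht2 : t * t = (Δ : ℝ) - 1)
    (h : V → ℕ) (v : V) (hd : G.degree v ≤ Δ)
    (hLip : ∀ u ∈ G.neighborFinset v, h v ≤ h u + 1)
    (hcnt : ((G.neighborFinset v).filter fun u => h u ≤ h v).card ≤ if h v = 0 then 2 else 1) :
    ∑ u ∈ G.neighborFinset v, t ^ ((h v : ℤ) - (h u : ℤ)) ≤ 2 * t := by
  have ht0 : (0 : ℝ) < t := by linarith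
  have hsplit := (Finset.sum_filter_add_sum_filter_not (G.neighborFinset v)
    (fun u => h u ≤ h v) (fun u => t ^ ((h v : ℤ) - (h u : ℤ))))
  set A := (G.neighborFinset v).filter fun u => h u ≤ h v with hA
  set B := (G.neighborFinset v).filter fun u => ¬ h u ≤ h v with hB
  have hcard : A.card + B.card = G.degree v := by
    rw [hA, hB, Finset.card_filter_add_card_filter_not,
      SimpleGraph.card_neighborFinset_eq_degree]
  set τ : ℝ := if h v = 0 then 1 else t with hτ
  have hAbound : ∑ u ∈ A, t ^ ((h v : ℤ) - (h u : ℤ)) ≤ (A.card : ℝ) * τ := by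
    have := Finset.sum_le_card_nsmul A (fun u => t ^ ((h v : ℤ) - (h u : ℤ))) τ ?_
    · simpa [nsmul_eq_mul] using this
    · intro u hu
      obtain ⟨hu1, hu2⟩ := Finset.mem_filter.mp hu
      show t ^ ((h v : ℤ) - (h u : ℤ)) ≤ τ
      rw [hτ]
      by_cases h0 : h v = 0
      · rw [if_pos h0]
        have : h u = 0 := by omega
        rw [h0, this]
        norm_num
      · rw [if_neg h0]
        have hl := hLip u hu1
        calc t ^ ((h v : ℤ) - (h u : ℤ)) ≤ t ^ (1 : ℤ) :=
              zpow_le_zpow_right₀ ht (by omega)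
          _ = t := zpow_one t
  have hBbound : ∑ u ∈ B, t ^ ((h v : ℤ) - (h u : ℤ)) ≤ (B.card : ℝ) * t⁻¹ := by
    have := Finset.sum_le_card_nsmul B (fun u => t ^ ((h v : ℤ) - (h u : ℤ))) t⁻¹ ?_
    · simpa [nsmul_eq_mul] using this
    · intro u hu
      obtain ⟨hu1, hu2⟩ := Finset.mem_filter.mp hu
      show t ^ ((h v : ℤ) - (h u : ℤ)) ≤ t⁻¹
      calc t ^ ((h v : ℤ) - (h u : ℤ)) ≤ t ^ (-1 : ℤ) :=
            zpow_le_zpow_right₀ ht (by omega)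
        _ = t⁻¹ := zpow_neg_one t
  rw [← hsplit]
  have hti : t * t⁻¹ = 1 := mul_inv_cancel₀ (ne_of_gt ht0)
  have hit0 : 0 < t⁻¹ := inv_pos.mpr ht0
  have hitle : t⁻¹ ≤ 1 := by
    rw [← hti]
    nlinarith
  have hcast : (A.card : ℝ) + (B.card : ℝ) ≤ (Δ : ℝ) := by
    have : A.card + B.card ≤ Δ := by omega
    exact_mod_cast this
  have hΔR : (2 : ℝ) ≤ (Δ : ℝ) := by exact_mod_cast hΔ
  by_cases h0 : h v = 0
  · have hcA : (A.card : ℝ) ≤ 2 := by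
      rw [if_pos h0] at hcnt; exact_mod_cast hcnt
    rw [hτ, if_pos h0] at hAbound
    have hB' : (B.card : ℝ) * t⁻¹ ≤ ((Δ : ℝ) - A.card) * t⁻¹ :=
      mul_le_mul_of_nonneg_right (by linarith) (le_of_lt hit0)
    have key : (A.card : ℝ) * 1 + ((Δ : ℝ) - A.card) * t⁻¹ ≤ 2 * t := by
      nlinarith [sq_nonneg (t - 1), mul_pos ht0 hit0, sq_nonneg ((A.card : ℝ) - 2)]
    linarith
  · have hcA : (A.card : ℝ) ≤ 1 := by
      rw [if_neg h0] at hcnt; exact_mod_cast hcnt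
    rw [hτ, if_neg h0] at hAbound
    have hB' : (B.card : ℝ) * t⁻¹ ≤ ((Δ : ℝ) - A.card) * t⁻¹ :=
      mul_le_mul_of_nonneg_right (by linarith) (le_of_lt hit0)
    have key : (A.card : ℝ) * t + ((Δ : ℝ) - A.card) * t⁻¹ ≤ 2 * t := by
      nlinarith [sq_nonneg (t - 1), mul_pos ht0 hit0, sq_nonneg ((A.card : ℝ) - 1)]
    linarith


lemma spectral_bound (α c : ℝ) (hα0 : 0 ≤ α) (hα1 : α ≤ 1)
    (w : V → ℝ) (hw : ∀ v, 0 < w v)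
    (hrow : ∀ v, α * G.degree v * w v + (1 - α) * ∑ u ∈ G.neighborFinset v, w u ≤ c * w v)
    (ρ : ℝ) (x : V → ℝ) (hx : x ≠ 0)
    (heig : (α • Matrix.diagonal (fun v => (G.degree v : ℝ)) + (1 - α) • G.adjMatrix ℝ) *ᵥ x
      = ρ • x) :
    ρ ≤ c := by
  have hev : ∀ v, α * ((G.degree v : ℝ) * x v) + (1 - α) * ∑ u ∈ G.neighborFinset v, x u
      = ρ * x v := by
    intro v
    have hv := congrFun heig v
    simpa [Matrix.add_mulVec, Matrix.smul_mulVec, Matrix.mulVec_diagonal,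
      SimpleGraph.adjMatrix_mulVec_apply, Pi.add_apply, Pi.smul_apply, smul_eq_mul] using hv
  obtain ⟨u₀, hu₀⟩ := Function.ne_iff.mp hx
  obtain ⟨v₀, -, hmax⟩ := Finset.exists_max_image Finset.univ (fun v => |x v| / w v)
    ⟨u₀, Finset.mem_univ u₀⟩
  have ht₀pos : 0 < |x v₀| / w v₀ :=
    lt_of_lt_of_le (div_pos (abs_pos.mpr hu₀) (hw u₀)) (hmax u₀ (Finset.mem_univ u₀))
  set t₀ := |x v₀| / w v₀ with ht₀
  have hkey : ∀ u, |x u| ≤ t₀ * w u := by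
    intro u
    have := hmax u (Finset.mem_univ u)
    rw [div_le_iff₀ (hw u)] at this
    linarith [this]
  have hxv₀ : |x v₀| = t₀ * w v₀ := by
    rw [ht₀, div_mul_cancel₀]
    exact ne_of_gt (hw v₀)
  have habs : |ρ| * |x v₀| ≤ c * (t₀ * w v₀) := by
    rw [← abs_mul]
    calc |ρ * x v₀| = |α * ((G.degree v₀ : ℝ) * x v₀) + (1 - α) * ∑ u ∈ G.neighborFinset v₀, x u| := by
          rw [hev v₀]
      _ ≤ α * ((G.degree v₀ : ℝ) * |x v₀|) + (1 - α) * ∑ u ∈ G.neighborFinset v₀, |x u| := by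
          refine (abs_add_le _ _).trans (add_le_add (le_of_eq ?_) ?_)
          · rw [abs_mul, abs_mul, abs_of_nonneg hα0, Nat.abs_cast]
          · rw [abs_mul, abs_of_nonneg (by linarith : (0:ℝ) ≤ 1 - α)]
            exact mul_le_mul_of_nonneg_left (Finset.abs_sum_le_sum_abs _ _) (by linarith)
      _ ≤ α * ((G.degree v₀ : ℝ) * (t₀ * w v₀)) + (1 - α) * ∑ u ∈ G.neighborFinset v₀, t₀ * w u := by
          gcongr
          · exact hkey v₀
          · exact hkey _
      _ = t₀ * (α * (G.degree v₀ : ℝ) * w v₀ + (1 - α) * ∑ u ∈ G.neighborFinset v₀, w u) := by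
          rw [← Finset.mul_sum]
          ring
      _ ≤ t₀ * (c * w v₀) := by
          have := hrow v₀
          have ht₀0 : 0 ≤ t₀ := le_of_lt ht₀pos
          nlinarith
      _ = c * (t₀ * w v₀) := by ring
  rw [hxv₀] at habs
  have hpos : 0 < t₀ * w v₀ := mul_pos ht₀pos (hw v₀)
  have : |ρ| ≤ c := le_of_mul_le_mul_right (by linarith [habs]) hpos
  calc ρ ≤ |ρ| := le_abs_self ρ
    _ ≤ c := this

end Unicyclic15

open Unicyclic15

theorem stmt_15 {V : Type*} [Fintype V] [DecidableEq V] (G : SimpleGraph V)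
    [DecidableRel G.Adj] (hconn : G.Connected)
    (hsize : G.edgeFinset.card = Fintype.card V - 1 ∨ G.edgeFinset.card = Fintype.card V)
    (hΔ : 2 ≤ G.maxDegree) (α : ℝ) (hα0 : 0 ≤ α) (hα1 : α ≤ 1) (ρ : ℝ)
    (hρ : IsGreatest {lam : ℝ | ∃ x : V → ℝ, x ≠ 0 ∧
        (α • Matrix.diagonal (fun v => (G.degree v : ℝ)) + (1 - α) • G.adjMatrix ℝ) *ᵥ x
          = lam • x} ρ) :
    ρ ≤ α * G.maxDegree + 2 * (1 - α) * Real.sqrt ((G.maxDegree : ℝ) - 1) := by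
  obtain ⟨h, hLip, hcnt⟩ := exists_good_levels hconn hsize
  set Δ := G.maxDegree with hΔdef
  set t := Real.sqrt ((Δ : ℝ) - 1) with htdef
  have hΔR : (2 : ℝ) ≤ (Δ : ℝ) := by exact_mod_cast hΔ
  have ht2 : t * t = (Δ : ℝ) - 1 := Real.mul_self_sqrt (by linarith)
  have ht1 : 1 ≤ t := Real.one_le_sqrt.mpr (by linarith)
  have ht0 : (0 : ℝ) < t := lt_of_lt_of_le one_pos ht1
  set w : V → ℝ := fun v => t ^ (-(h v : ℤ)) with hwdef
  have hw : ∀ v, 0 < w v := fun v => zpow_pos ht0 _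
  have hrow : ∀ v, α * G.degree v * w v + (1 - α) * ∑ u ∈ G.neighborFinset v, w u
      ≤ (α * Δ + 2 * (1 - α) * t) * w v := by
    intro v
    have hsum := sum_pow_le ht1 hΔ ht2 h v (G.degree_le_maxDegree v)
      (fun u hu => hLip u v ((SimpleGraph.mem_neighborFinset G v u).mp hu).symm) (hcnt v)
    have hfact : ∀ u, w u = t ^ ((h v : ℤ) - (h u : ℤ)) * w v := by
      intro u
      show t ^ (-(h u : ℤ)) = t ^ ((h v : ℤ) - (h u : ℤ)) * t ^ (-(h v : ℤ))
      rw [← zpow_add₀ (ne_of_gt ht0)]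
      congr 1
      ring
    have e1 : ∑ u ∈ G.neighborFinset v, w u ≤ 2 * t * w v := by
      rw [Finset.sum_congr rfl (fun u _ => hfact u), ← Finset.sum_mul]
      exact mul_le_mul_of_nonneg_right hsum (le_of_lt (hw v))
    have e2 : α * (G.degree v : ℝ) * w v ≤ α * (Δ : ℝ) * w v := by
      apply mul_le_mul_of_nonneg_right _ (le_of_lt (hw v))
      exact mul_le_mul_of_nonneg_left (by exact_mod_cast G.degree_le_maxDegree v) hα0
    have e3 : (1 - α) * ∑ u ∈ G.neighborFinset v, w u ≤ (1 - α) * (2 * t * w v) :=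
      mul_le_mul_of_nonneg_left e1 (by linarith)
    nlinarith [e2, e3]
  obtain ⟨x, hx, heig⟩ := hρ.1
  exact spectral_bound α (α * Δ + 2 * (1 - α) * t) hα0 hα1 w hw hrow ρ x hx heig
end

section
/- Let G be a finite simple graph with n vertices and m edges and eigenvalues λ₁,…,λₙ of A_α(G). Define the α-energy E_α(G) = Σᵢ |λᵢ − 2αm/n|. Then E_α(G) ≤ √(2(1−α)²mn + α²(n·Z(G) − 4m²)), where Z(G) = Σ_{u} deg(u)². -/
open Matrix Finset

lemma aux_trace {n : Type*} [Fintype n] [DecidableEq n] {A : Matrix n n ℝ}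
    (hA : A.IsHermitian) :
    A.trace = ∑ i, hA.eigenvalues i ∧ (A * A).trace = ∑ i, hA.eigenvalues i ^ 2 := by
  have hUU : star (hA.eigenvectorUnitary : Matrix n n ℝ)
      * (hA.eigenvectorUnitary : Matrix n n ℝ) = 1 :=
    Unitary.coe_star_mul_self hA.eigenvectorUnitary
  have hsp := hA.spectral_theorem
  rw [Unitary.conjStarAlgAut_apply] at hsp
  constructor
  · conv_lhs => rw [hsp]
    rw [trace_mul_cycle, hUU, one_mul, trace_diagonal]
    simp
  · conv_lhs => rw [hsp]
    simp only [← mul_assoc]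
    rw [mul_assoc ((hA.eigenvectorUnitary : Matrix n n ℝ)
        * diagonal (RCLike.ofReal ∘ hA.eigenvalues)) _ (hA.eigenvectorUnitary : Matrix n n ℝ),
      hUU, mul_one, trace_mul_cycle]
    simp only [← mul_assoc]
    rw [hUU, one_mul, diagonal_mul_diagonal, trace_diagonal]
    simp [pow_two]

theorem stmt_17 {V : Type*} [Fintype V] [DecidableEq V] [Nonempty V] (G : SimpleGraph V)
    [DecidableRel G.Adj] (α : ℝ)
    (hA : (α • Matrix.diagonal (fun v => (G.degree v : ℝ))
      + (1 - α) • G.adjMatrix ℝ).IsHermitian) :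
    ∑ i, |hA.eigenvalues i - 2 * α * G.edgeFinset.card / Fintype.card V|
      ≤ Real.sqrt (2 * (1 - α) ^ 2 * G.edgeFinset.card * Fintype.card V
          + α ^ 2 * ((Fintype.card V : ℝ) * ∑ u, (G.degree u : ℝ) ^ 2
            - 4 * (G.edgeFinset.card : ℝ) ^ 2)) := by
  classical
  set n : ℝ := (Fintype.card V : ℝ) with hn
  set m : ℝ := (G.edgeFinset.card : ℝ) with hm
  set Z : ℝ := ∑ u, (G.degree u : ℝ) ^ 2 with hZ
  set D : Matrix V V ℝ := Matrix.diagonal (fun v => (G.degree v : ℝ)) with hD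
  set A : Matrix V V ℝ := G.adjMatrix ℝ with hAdj
  have hnpos : (0:ℝ) < n := by
    rw [hn]; exact_mod_cast Fintype.card_pos
  have hdeg : ∑ v, (G.degree v : ℝ) = 2 * m := by
    rw [hm]
    exact_mod_cast congrArg (Nat.cast : ℕ → ℝ) G.sum_degrees_eq_twice_card_edges
  -- diagonal entries lemmas
  have tD : D.trace = 2 * m := by rw [hD, trace_diagonal, hdeg]
  have tA : A.trace = 0 := by rw [hAdj]; simp [SimpleGraph.trace_adjMatrix]
  have tDD : (D * D).trace = Z := by
    rw [hD, diagonal_mul_diagonal, trace_diagonal, hZ]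
    simp [pow_two]
  have tDA : (D * A).trace = 0 := by
    rw [hD, hAdj]
    simp only [Matrix.trace, Matrix.diag, Matrix.diagonal_mul, SimpleGraph.adjMatrix_apply]
    simp
  have tAD : (A * D).trace = 0 := by
    rw [hD, hAdj]
    simp only [Matrix.trace, Matrix.diag, Matrix.mul_diagonal, SimpleGraph.adjMatrix_apply]
    simp
  have tAA : (A * A).trace = 2 * m := by
    rw [hAdj]
    simp only [Matrix.trace, Matrix.diag, SimpleGraph.adjMatrix_mul_self_apply_self]
    exact hdeg
  have t1 : ∑ i, hA.eigenvalues i = α * (2 * m) := by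
    rw [← (aux_trace hA).1]
    simp only [trace_add, trace_smul, smul_eq_mul]
    rw [tD, tA]; ring
  have t2 : ∑ i, hA.eigenvalues i ^ 2 = α ^ 2 * Z + (1 - α) ^ 2 * (2 * m) := by
    rw [← (aux_trace hA).2]
    have : (α • D + (1 - α) • A) * (α • D + (1 - α) • A)
        = (α * α) • (D * D) + (α * (1 - α)) • (D * A)
          + ((1 - α) * α) • (A * D) + ((1 - α) * (1 - α)) • (A * A) := by
      simp only [add_mul, mul_add, smul_mul_assoc, mul_smul_comm, smul_smul]
      module
    rw [this]
    simp only [trace_add, trace_smul, smul_eq_mul]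
    rw [tDD, tDA, tAD, tAA]; ring
  set c : ℝ := 2 * α * m / n with hc
  have cs : (∑ i, |hA.eigenvalues i - c|) ^ 2 ≤ n * ∑ i, (hA.eigenvalues i - c) ^ 2 := by
    have h := Finset.sum_mul_sq_le_sq_mul_sq Finset.univ (fun _ : V => (1:ℝ))
      (fun i => |hA.eigenvalues i - c|)
    simp only [one_mul, one_pow, sq_abs] at h
    simpa [hn, Finset.sum_const, nsmul_eq_mul] using h
  have expand : ∑ i, (hA.eigenvalues i - c) ^ 2
      = (∑ i, hA.eigenvalues i ^ 2) - 2 * c * (∑ i, hA.eigenvalues i) + n * c ^ 2 := by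
    have h : ∀ i ∈ Finset.univ, (hA.eigenvalues i - c) ^ 2
        = hA.eigenvalues i ^ 2 - 2 * c * hA.eigenvalues i + c ^ 2 := fun i _ => by ring
    rw [Finset.sum_congr rfl h, Finset.sum_add_distrib, Finset.sum_sub_distrib,
      ← Finset.mul_sum, Finset.sum_const, nsmul_eq_mul, Finset.card_univ, ← hn]
  have hR : n * ∑ i, (hA.eigenvalues i - c) ^ 2
      = 2 * (1 - α) ^ 2 * m * n + α ^ 2 * (n * Z - 4 * m ^ 2) := by
    rw [expand, t1, t2, hc]
    field_simp
    ring
  rw [← hR]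
  have hx : 0 ≤ ∑ i, |hA.eigenvalues i - c| := Finset.sum_nonneg fun i _ => abs_nonneg _
  have hy : (0:ℝ) ≤ n * ∑ i, (hA.eigenvalues i - c) ^ 2 :=
    mul_nonneg hnpos.le (Finset.sum_nonneg fun i _ => sq_nonneg _)
  exact (Real.le_sqrt hx hy).mpr cs
end

section
/- Let G be a finite simple graph with n vertices and m edges and eigenvalues λ₁,…,λₙ of A_α(G). Then the α-energy satisfies E_α(G) ≥ √(2·(2(1−α)²m + α²(Z(G) − 4m²/n))), where E_α(G) = Σᵢ |λᵢ − 2αm/n| and Z(G) = Σ_u deg(u)². -/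
open Matrix Finset

section aux
variable {n : Type*} [Fintype n] [DecidableEq n]

lemma my_trace_eq (A : Matrix n n ℝ) (hA : A.IsHermitian) :
    A.trace = ∑ i, hA.eigenvalues i := by
  conv_lhs => rw [hA.spectral_theorem, Unitary.conjStarAlgAut_apply]
  rw [trace_mul_cycle, Unitary.coe_star_mul_self, one_mul, trace_diagonal]
  simp

lemma my_trace_sq_eq (A : Matrix n n ℝ) (hA : A.IsHermitian) :
    (A * A).trace = ∑ i, hA.eigenvalues i ^ 2 := by
  have hU : (hA.eigenvectorUnitary : Matrix n n ℝ) * star (hA.eigenvectorUnitary : Matrix n n ℝ) = 1 :=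
    (Matrix.mem_unitaryGroup_iff).mp (hA.eigenvectorUnitary).2
  have hD : star (hA.eigenvectorUnitary : Matrix n n ℝ) * A * (hA.eigenvectorUnitary : Matrix n n ℝ)
      = diagonal ((RCLike.ofReal : ℝ → ℝ) ∘ hA.eigenvalues) := by
    have := hA.conjStarAlgAut_star_eigenvectorUnitary
    rw [Unitary.conjStarAlgAut_apply] at this
    simpa only [Unitary.coe_star, star_star] using this
  have key : star (hA.eigenvectorUnitary : Matrix n n ℝ) * (A * A) * (hA.eigenvectorUnitary : Matrix n n ℝ)
      = diagonal ((RCLike.ofReal : ℝ → ℝ) ∘ hA.eigenvalues) * diagonal ((RCLike.ofReal : ℝ → ℝ) ∘ hA.eigenvalues) := by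
    rw [← hD]
    have : (A : Matrix n n ℝ) * A = A * ((hA.eigenvectorUnitary : Matrix n n ℝ) * star (hA.eigenvectorUnitary : Matrix n n ℝ)) * A := by
      rw [hU, mul_one]
    rw [this]
    noncomm_ring
  have := congrArg Matrix.trace key
  rw [trace_mul_cycle, ← mul_assoc, hU, one_mul] at this
  rw [this, diagonal_mul_diagonal, trace_diagonal]
  simp [sq]

lemma my_key {ι : Type*} [Fintype ι] [DecidableEq ι] (f : ι → ℝ) (h : ∑ i, f i = 0) :
    Real.sqrt (2 * ∑ i, f i ^ 2) ≤ ∑ i, |f i| := by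
  have habs : 0 ≤ ∑ i, |f i| := Finset.sum_nonneg fun i _ => abs_nonneg _
  rw [show (∑ i, |f i|) = Real.sqrt ((∑ i, |f i|) ^ 2) from (Real.sqrt_sq habs).symm]
  apply Real.sqrt_le_sqrt
  set s := Finset.univ.filter (fun i : ι => 0 ≤ f i) with hs
  have hsplit : ∀ g : ι → ℝ, ∑ i, g i = ∑ i ∈ s, g i + ∑ i ∈ sᶜ, g i := fun g =>
    (Finset.sum_add_sum_compl s g).symm
  have hP : ∑ i ∈ sᶜ, (-f i) = ∑ i ∈ s, f i := by
    have := h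
    rw [hsplit f] at this
    have : ∑ i ∈ sᶜ, f i = - ∑ i ∈ s, f i := by linarith
    rw [Finset.sum_neg_distrib, this, neg_neg]
  have hPnn : 0 ≤ ∑ i ∈ s, f i := Finset.sum_nonneg fun i hi => (Finset.mem_filter.mp hi).2
  have habs2 : ∑ i, |f i| = 2 * ∑ i ∈ s, f i := by
    rw [hsplit (fun i => |f i|)]
    have h1 : ∑ i ∈ s, |f i| = ∑ i ∈ s, f i :=
      Finset.sum_congr rfl fun i hi => abs_of_nonneg (Finset.mem_filter.mp hi).2
    have h2 : ∑ i ∈ sᶜ, |f i| = ∑ i ∈ sᶜ, (-f i) :=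
      Finset.sum_congr rfl fun i hi => by
        have : ¬ (0 ≤ f i) := by
          simpa [hs] using (Finset.mem_compl.mp hi)
        rw [abs_of_neg (lt_of_not_ge this)]
    rw [h1, h2, hP]; ring
  have hsq1 : ∑ i ∈ s, f i ^ 2 ≤ (∑ i ∈ s, f i) ^ 2 := by
    exact Finset.sum_sq_le_sq_sum_of_nonneg (fun i hi => (Finset.mem_filter.mp hi).2)
  have hsq2 : ∑ i ∈ sᶜ, f i ^ 2 ≤ (∑ i ∈ s, f i) ^ 2 := by
    have : ∑ i ∈ sᶜ, (-f i) ^ 2 ≤ (∑ i ∈ sᶜ, (-f i)) ^ 2 := by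
      refine Finset.sum_sq_le_sq_sum_of_nonneg (fun i hi => ?_)
      have : ¬ (0 ≤ f i) := by simpa [hs] using (Finset.mem_compl.mp hi)
      linarith [lt_of_not_ge this]
    simpa [hP] using this
  rw [hsplit (fun i => f i ^ 2), habs2]
  nlinarith [hsq1, hsq2]
end aux

theorem stmt_18 {V : Type*} [Fintype V] [DecidableEq V] [Nonempty V] (G : SimpleGraph V)
    [DecidableRel G.Adj] (α : ℝ)
    (hA : (α • Matrix.diagonal (fun v => (G.degree v : ℝ))
      + (1 - α) • G.adjMatrix ℝ).IsHermitian) :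
    Real.sqrt (2 * (2 * (1 - α) ^ 2 * G.edgeFinset.card
        + α ^ 2 * (∑ u, (G.degree u : ℝ) ^ 2
          - 4 * (G.edgeFinset.card : ℝ) ^ 2 / Fintype.card V)))
      ≤ ∑ i, |hA.eigenvalues i - 2 * α * G.edgeFinset.card / Fintype.card V| := by
  set M := α • Matrix.diagonal (fun v => (G.degree v : ℝ)) + (1 - α) • G.adjMatrix ℝ with hM
  set m : ℝ := (G.edgeFinset.card : ℝ)
  set nn : ℝ := (Fintype.card V : ℝ)
  have hn : nn ≠ 0 := Nat.cast_ne_zero.mpr Fintype.card_ne_zero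
  have hdeg : ∑ v, (G.degree v : ℝ) = 2 * m := by
    have h0 := G.sum_degrees_eq_twice_card_edges
    show ∑ v, (G.degree v : ℝ) = 2 * (G.edgeFinset.card : ℝ)
    exact_mod_cast h0
  have htr : M.trace = 2 * α * m := by
    rw [hM, Matrix.trace_add, Matrix.trace_smul, Matrix.trace_smul, Matrix.trace_diagonal,
      SimpleGraph.trace_adjMatrix]
    rw [hdeg]
    simp only [smul_eq_mul, mul_zero, add_zero]
    ring
  have htrDA : (Matrix.diagonal (fun v => (G.degree v : ℝ)) * G.adjMatrix ℝ).trace = 0 := by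
    rw [Matrix.trace]
    apply Finset.sum_eq_zero
    intro i _
    have h1 : (Matrix.diagonal (fun v => (G.degree v : ℝ)) * G.adjMatrix ℝ) i i
        = (G.degree i : ℝ) * G.adjMatrix ℝ i i := Matrix.diagonal_mul _ _ i i
    simp [Matrix.diag, h1]
  have htrAD : (G.adjMatrix ℝ * Matrix.diagonal (fun v => (G.degree v : ℝ))).trace = 0 := by
    rw [Matrix.trace]
    apply Finset.sum_eq_zero
    intro i _
    have h1 : (G.adjMatrix ℝ * Matrix.diagonal (fun v => (G.degree v : ℝ))) i i
        = G.adjMatrix ℝ i i * (G.degree i : ℝ) := Matrix.mul_diagonal _ _ i i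
    simp [Matrix.diag, h1]
  have htrAA : (G.adjMatrix ℝ * G.adjMatrix ℝ).trace = 2 * m := by
    rw [Matrix.trace]
    rw [show ∑ i, (G.adjMatrix ℝ * G.adjMatrix ℝ).diag i = ∑ i, (G.degree i : ℝ) from
      Finset.sum_congr rfl fun i _ => by
        show (G.adjMatrix ℝ * G.adjMatrix ℝ) i i = _
        rw [SimpleGraph.adjMatrix_mul_self_apply_self]]
    exact hdeg
  have htrDD : (Matrix.diagonal (fun v => (G.degree v : ℝ)) * Matrix.diagonal (fun v => (G.degree v : ℝ))).trace
      = ∑ u, (G.degree u : ℝ) ^ 2 := by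
    rw [Matrix.diagonal_mul_diagonal, Matrix.trace_diagonal]
    simp [sq]
  have htr2 : (M * M).trace = α ^ 2 * ∑ u, (G.degree u : ℝ) ^ 2 + (1 - α) ^ 2 * (2 * m) := by
    rw [hM]
    simp only [add_mul, mul_add, Matrix.smul_mul, Matrix.mul_smul, Matrix.trace_add,
      Matrix.trace_smul, htrDA, htrAD, htrAA, htrDD]
    simp only [smul_eq_mul, mul_zero]
    ring
  have hsum : ∑ i, hA.eigenvalues i = 2 * α * m := by
    rw [← my_trace_eq M hA, htr]
  have hsumsq : ∑ i, hA.eigenvalues i ^ 2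
      = α ^ 2 * ∑ u, (G.degree u : ℝ) ^ 2 + (1 - α) ^ 2 * (2 * m) := by
    rw [← my_trace_sq_eq M hA, htr2]
  set t : ℝ := 2 * α * m / nn with ht
  have hcard : (Fintype.card V : ℝ) = nn := rfl
  have hzero : ∑ i, (hA.eigenvalues i - t) = 0 := by
    rw [Finset.sum_sub_distrib, hsum, Finset.sum_const, Finset.card_univ, nsmul_eq_mul, ht]
    field_simp
    simp [nn]
  have key := my_key (fun i => hA.eigenvalues i - t) hzero
  have heq : 2 * (2 * (1 - α) ^ 2 * m + α ^ 2 * (∑ u, (G.degree u : ℝ) ^ 2 - 4 * m ^ 2 / nn))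
      = 2 * ∑ i, (hA.eigenvalues i - t) ^ 2 := by
    have : ∑ i, (hA.eigenvalues i - t) ^ 2
        = ∑ i, hA.eigenvalues i ^ 2 - 2 * t * ∑ i, hA.eigenvalues i + nn * t ^ 2 := by
      rw [Finset.sum_congr rfl (fun i _ => by ring :
        ∀ i ∈ Finset.univ, (hA.eigenvalues i - t) ^ 2
          = hA.eigenvalues i ^ 2 - 2 * t * hA.eigenvalues i + t ^ 2)]
      rw [Finset.sum_add_distrib, Finset.sum_sub_distrib, ← Finset.mul_sum,
        Finset.sum_const, Finset.card_univ, nsmul_eq_mul]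
    rw [this, hsum, hsumsq, ht]
    field_simp
    ring
  rw [heq]
  exact key
end

section
/- Let B be an n×n nonnegative real matrix with row sums r₁ ≥ … ≥ rₙ, maximum diagonal entry M, and maximum off-diagonal entry N > 0. Then for each ℓ with 1 ≤ ℓ ≤ n, the spectral radius ρ(B) satisfies ρ(B) ≤ (r_ℓ + M − N + √((r_ℓ − M + N)² + 4N·Σ_{i=1}^{ℓ−1}(rᵢ − r_ℓ)))/2. -/
open Matrix Finset

theorem stmt_19 (n : ℕ) (hn : 1 ≤ n) (B : Matrix (Fin n) (Fin n) ℝ)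
    (hB : ∀ i j, 0 ≤ B i j)
    (r : Fin n → ℝ) (hr : ∀ i, r i = ∑ j, B i j)
    (hmono : ∀ i j : Fin n, i ≤ j → r j ≤ r i)
    (M N : ℝ)
    (hM : IsGreatest {m : ℝ | ∃ i, B i i = m} M)
    (hN : IsGreatest {m : ℝ | ∃ i j, i ≠ j ∧ B i j = m} N)
    (hNpos : 0 < N)
    (ℓ : Fin n) (μ : ℂ) (x : Fin n → ℂ) (hx : x ≠ 0)
    (heig : (B.map (fun t => (t : ℂ))) *ᵥ x = μ • x) :
    ‖μ‖
      ≤ (r ℓ + M - N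
          + Real.sqrt ((r ℓ - M + N) ^ 2 + 4 * N * ∑ i ∈ Finset.Iio ℓ, (r i - r ℓ))) / 2 := by
  have hM_le : ∀ i, B i i ≤ M := fun i => hM.2 ⟨i, rfl⟩
  have hN_le : ∀ i j, i ≠ j → B i j ≤ N := fun i j hij => hN.2 ⟨i, j, hij, rfl⟩
  set S : ℝ := ∑ i ∈ Finset.Iio ℓ, (r i - r ℓ) with hSdef
  have hrmono : ∀ i : Fin n, i < ℓ → r ℓ ≤ r i := fun i hi => hmono i ℓ hi.le
  have hterm : ∀ i ∈ Finset.Iio ℓ, (0:ℝ) ≤ r i - r ℓ := fun i hi => by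
    have := hrmono i (Finset.mem_Iio.mp hi); linarith
  have hS0 : 0 ≤ S := Finset.sum_nonneg hterm
  have hΔ0 : 0 ≤ (r ℓ - M + N) ^ 2 + 4 * N * S := by positivity
  set s : ℝ := Real.sqrt ((r ℓ - M + N) ^ 2 + 4 * N * S) with hsdef
  have hs0 : 0 ≤ s := Real.sqrt_nonneg _
  have hs2 : s ^ 2 = (r ℓ - M + N) ^ 2 + 4 * N * S := Real.sq_sqrt hΔ0
  set φ : ℝ := (r ℓ + M - N + s) / 2 with hφdef
  set c : ℝ := φ - M + N with hcdef
  -- c > 0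
  obtain ⟨m, hm⟩ := hM.1
  have hrm : M ≤ r m := by
    rw [hr m, ← hm]
    exact Finset.single_le_sum (fun j _ => hB m j) (Finset.mem_univ m)
  have hc0 : 0 < c := by
    rcases lt_or_ge (M - N) (r ℓ) with h | h
    · have : 0 ≤ s := hs0
      rw [hcdef, hφdef]; linarith
    · have hmℓ : m < ℓ := by
        by_contra hcon
        push_neg at hcon
        have := hmono ℓ m hcon
        linarith
      have hSlb : M - r ℓ ≤ S := by
        calc M - r ℓ ≤ r m - r ℓ := by linarith
        _ ≤ S := Finset.single_le_sum hterm (Finset.mem_Iio.mpr hmℓ)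
      have hlt : M - N - r ℓ < s := by nlinarith [hs2, hs0]
      rw [hcdef, hφdef]; linarith
  have hkey : c * (φ - r ℓ) = N * S := by
    have h1 : c = (r ℓ - M + N + s) / 2 := by rw [hcdef, hφdef]; ring
    have h2 : φ - r ℓ = (s - (r ℓ - M + N)) / 2 := by rw [hφdef]; ring
    rw [h1, h2]; linear_combination hs2 / 4
  have hφc : φ = c + M - N := by rw [hcdef]; ring
  -- the weights
  set u : Fin n → ℝ := fun i => if i < ℓ then c + (r i - r ℓ) else c with hudef
  have hu_pos : ∀ i, 0 < u i := by
    intro i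
    by_cases h : i < ℓ
    · have := hrmono i h
      simp only [hudef, if_pos h]
      linarith
    · simp only [hudef, if_neg h]
      exact hc0
  have hIio : Finset.Iio ℓ = Finset.univ.filter (fun j : Fin n => j < ℓ) := by
    ext j; simp
  have hrow : ∀ i, ∑ j, B i j * u j ≤ φ * u i := by
    intro i
    have expand : ∑ j, B i j * u j
        = c * r i + ∑ j ∈ Finset.Iio ℓ, B i j * (r j - r ℓ) := by
      have hpt : ∀ j : Fin n, B i j * u j
          = B i j * c + (if j < ℓ then B i j * (r j - r ℓ) else 0) := by
        intro j
        by_cases h : j < ℓ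
        · simp only [hudef, if_pos h]; ring
        · simp only [hudef, if_neg h]; ring
      rw [Finset.sum_congr rfl fun j _ => hpt j, Finset.sum_add_distrib,
        ← Finset.sum_mul, ← hr i, hIio, ← Finset.sum_filter]
      ring
    by_cases hi : i < ℓ
    · have hsplit : ∑ j ∈ Finset.Iio ℓ, B i j * (r j - r ℓ)
          = B i i * (r i - r ℓ) + ∑ j ∈ (Finset.Iio ℓ).erase i, B i j * (r j - r ℓ) :=
        (Finset.add_sum_erase _ _ (Finset.mem_Iio.mpr hi)).symm
      have h1 : B i i * (r i - r ℓ) ≤ M * (r i - r ℓ) :=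
        mul_le_mul_of_nonneg_right (hM_le i) (by linarith [hrmono i hi])
      have h2 : ∑ j ∈ (Finset.Iio ℓ).erase i, B i j * (r j - r ℓ)
          ≤ ∑ j ∈ (Finset.Iio ℓ).erase i, N * (r j - r ℓ) := by
        apply Finset.sum_le_sum
        intro j hj
        exact mul_le_mul_of_nonneg_right
          (hN_le i j (Ne.symm (Finset.ne_of_mem_erase hj)))
          (hterm j (Finset.mem_of_mem_erase hj))
      have h3 : ∑ j ∈ (Finset.Iio ℓ).erase i, N * (r j - r ℓ)
          = N * S - N * (r i - r ℓ) := by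
        rw [← Finset.mul_sum, Finset.sum_erase_eq_sub (Finset.mem_Iio.mpr hi), hSdef]
        ring
      have hub : u i = c + (r i - r ℓ) := by simp only [hudef, if_pos hi]
      have hiden : c * r i + (M * (r i - r ℓ) + (N * S - N * (r i - r ℓ)))
          = φ * (c + (r i - r ℓ)) := by
        linear_combination (r i - r ℓ) * hφc - hkey
      rw [expand, hub]
      linarith [hsplit, h1, h2, h3, hiden]
    · push_neg at hi
      have hub : u i = c := by simp only [hudef, if_neg (not_lt.mpr hi)]
      have h2 : ∑ j ∈ Finset.Iio ℓ, B i j * (r j - r ℓ) ≤ N * S := by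
        rw [hSdef, Finset.mul_sum]
        apply Finset.sum_le_sum
        intro j hj
        have hji : j ≠ i := ne_of_lt (lt_of_lt_of_le (Finset.mem_Iio.mp hj) hi)
        exact mul_le_mul_of_nonneg_right (hN_le i j hji.symm) (hterm j hj)
      have hril : r i ≤ r ℓ := hmono ℓ i hi
      have hcr : c * r i ≤ c * r ℓ := mul_le_mul_of_nonneg_left hril hc0.le
      rw [expand, hub]
      nlinarith [hkey, h2, hcr]
  -- eigenvector part
  set y : Fin n → ℝ := fun i => ‖x i‖ with hydef
  have hy0 : ∀ i, 0 ≤ y i := fun i => norm_nonneg _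
  have hne : (Finset.univ : Finset (Fin n)).Nonempty := ⟨⟨0, hn⟩, Finset.mem_univ _⟩
  obtain ⟨p, -, hp⟩ := Finset.exists_max_image Finset.univ (fun i => y i / u i) hne
  obtain ⟨k, hk⟩ : ∃ k, x k ≠ 0 := Function.ne_iff.mp hx
  have hyk : 0 < y k := by
    simp only [hydef]
    exact norm_pos_iff.mpr hk
  have hzp : 0 < y p / u p :=
    lt_of_lt_of_le (div_pos hyk (hu_pos k)) (hp k (Finset.mem_univ k))
  have hyp : 0 < y p := by
    rcases (hy0 p).lt_or_eq with h | h
    · exact h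
    · exfalso
      rw [← h, zero_div] at hzp
      exact lt_irrefl 0 hzp
  have hbound : ∀ j, y j * u p ≤ y p * u j := fun j =>
    (div_le_div_iff₀ (hu_pos j) (hu_pos p)).mp (hp j (Finset.mem_univ j))
  have heigp : ‖μ‖ * y p ≤ ∑ j, B p j * y j := by
    have h1 : ∑ j, (B p j : ℂ) * x j = μ * x p := by
      have h := congrFun heig p
      simpa [Matrix.mulVec, dotProduct, Matrix.map_apply, Pi.smul_apply,
        smul_eq_mul] using h
    calc ‖μ‖ * y p = ‖μ * x p‖ := by
          simp only [hydef, norm_mul]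
    _ = ‖∑ j, (B p j : ℂ) * x j‖ := by rw [h1]
    _ ≤ ∑ j, ‖(B p j : ℂ) * x j‖ := norm_sum_le _ _
    _ = ∑ j, B p j * y j := by
        apply Finset.sum_congr rfl
        intro j _
        simp only [hydef, norm_mul, Complex.norm_real, Real.norm_eq_abs, abs_of_nonneg (hB p j)]
  have hmain : ‖μ‖ * (y p * u p) ≤ φ * (y p * u p) := by
    calc ‖μ‖ * (y p * u p) = (‖μ‖ * y p) * u p := by ring
    _ ≤ (∑ j, B p j * y j) * u p := mul_le_mul_of_nonneg_right heigp (hu_pos p).le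
    _ = ∑ j, B p j * (y j * u p) := by
        rw [Finset.sum_mul]
        exact Finset.sum_congr rfl fun j _ => by ring
    _ ≤ ∑ j, B p j * (y p * u j) :=
        Finset.sum_le_sum fun j _ => mul_le_mul_of_nonneg_left (hbound j) (hB p j)
    _ = y p * ∑ j, B p j * u j := by
        rw [Finset.mul_sum]
        exact Finset.sum_congr rfl fun j _ => by ring
    _ ≤ y p * (φ * u p) := mul_le_mul_of_nonneg_left (hrow p) hyp.le
    _ = φ * (y p * u p) := by ring
  exact le_of_mul_le_mul_right hmain (mul_pos hyp (hu_pos p))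
end
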